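/- arXiv:1306.5710 — 11 statements merged into one kernel-verified Lean document; each statement's English description precedes it below -/
import Mathlib

section
/- Let R be a ring, a ∈ R left cancellative, and aR = y_nR ⊊ … ⊊ y_1R ⊊ R a chain as above with y_{i-1} x_i = y_i. If y_1',…,y_{n-1}' are also left cancellative with y_i'R = y_iR, y_0' = 1, y_n' = a, and x_i' are defined by y'_{i-1} x_i' = y_i', then there exist units ε_1,…,ε_{n-1} ∈ U(R) such that x_1' = x_1 ε_1, x_i' = ε_{i-1}^{-1} x_i ε_i for 2 ≤ i ≤ n−1, and x_n' = ε_{n-1}^{-1} x_n. -/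
open Submodule MulOpposite

/-- Uniqueness, up to insertion of units, of the factorization determined by a chain of
principal right ideals. The units are encoded as `ε : ℕ → Rˣ` with the convention
`ε 0 = 1` and `ε n = 1`, so that `x'_i = ε_{i-1}⁻¹ x_i ε_i` for all `1 ≤ i ≤ n` encodes
`x'_1 = x_1 ε_1`, `x'_i = ε_{i-1}⁻¹ x_i ε_i` (`2 ≤ i ≤ n-1`) and `x'_n = ε_{n-1}⁻¹ x_n`. -/
theorem stmt_3 {R : Type*} [Ring R] (n : ℕ) (hn : 1 ≤ n) (a : R)
    (ha : a ≠ 0 ∧ ∀ b c : R, a * b = a * c → b = c)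
    (y x y' x' : ℕ → R)
    (hy0 : y 0 = 1) (hyn : y n = a)
    (hy0' : y' 0 = 1) (hyn' : y' n = a)
    (hcanc : ∀ i, 1 ≤ i → i ≤ n - 1 → (y i ≠ 0 ∧ ∀ b c : R, y i * b = y i * c → b = c))
    (hcanc' : ∀ i, 1 ≤ i → i ≤ n - 1 → (y' i ≠ 0 ∧ ∀ b c : R, y' i * b = y' i * c → b = c))
    (hchain : ∀ i, 1 ≤ i → i ≤ n →
      Submodule.span Rᵐᵒᵖ {y i} < Submodule.span Rᵐᵒᵖ {y (i - 1)})
    (heq : ∀ i, 1 ≤ i → i ≤ n - 1 →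
      Submodule.span Rᵐᵒᵖ {y' i} = Submodule.span Rᵐᵒᵖ {y i})
    (hx : ∀ i, 1 ≤ i → i ≤ n → y (i - 1) * x i = y i)
    (hx' : ∀ i, 1 ≤ i → i ≤ n → y' (i - 1) * x' i = y' i) :
    ∃ ε : ℕ → Rˣ, ε 0 = 1 ∧ ε n = 1 ∧
      ∀ i, 1 ≤ i → i ≤ n → x' i = ((ε (i - 1))⁻¹ : Rˣ) * x i * (ε i : R) := by
  classical
  -- cancellation for y j, all j ≤ n - 1 (including j = 0 via y 0 = 1), and j = n via a
  have canc : ∀ j, j ≤ n → ∀ b c : R, y j * b = y j * c → b = c := by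
    intro j hj b c h
    rcases Nat.eq_zero_or_pos j with h0 | h1
    · simpa [h0, hy0] using h
    rcases eq_or_lt_of_le hj with rfl | hlt
    · exact ha.2 b c (by simpa [hyn] using h)
    · exact (hcanc j h1 (Nat.le_sub_one_of_lt hlt)).2 b c h
  -- for each i ≤ n there is a unit u with y' i = y i * u, and u = 1 at endpoints
  have H : ∀ i, i ≤ n → ∃ u : Rˣ, ((i = 0 ∨ i = n) → u = 1) ∧ y' i = y i * u := by
    intro i hi
    rcases Nat.eq_zero_or_pos i with rfl | h1
    · exact ⟨1, fun _ => rfl, by simp [hy0, hy0']⟩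
    rcases eq_or_lt_of_le hi with rfl | hlt
    · exact ⟨1, fun _ => rfl, by simp [hyn, hyn']⟩
    have hi' : i ≤ n - 1 := Nat.le_sub_one_of_lt hlt
    have hsp := heq i h1 hi'
    have h1m : y' i ∈ Submodule.span Rᵐᵒᵖ {y i} := by
      rw [← hsp]; exact Submodule.mem_span_singleton_self _
    have h2m : y i ∈ Submodule.span Rᵐᵒᵖ {y' i} := by
      rw [hsp]; exact Submodule.mem_span_singleton_self _
    obtain ⟨c, hc⟩ := Submodule.mem_span_singleton.mp h1m
    obtain ⟨d, hd⟩ := Submodule.mem_span_singleton.mp h2m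
    have hc' : y i * c.unop = y' i := by simpa [MulOpposite.smul_eq_mul_unop] using hc
    have hd' : y' i * d.unop = y i := by simpa [MulOpposite.smul_eq_mul_unop] using hd
    have hcd : c.unop * d.unop = 1 := by
      apply (hcanc i h1 hi').2
      rw [← mul_assoc, hc', hd', mul_one]
    have hdc : d.unop * c.unop = 1 := by
      apply (hcanc' i h1 hi').2
      rw [← mul_assoc, hd', hc', mul_one]
    exact ⟨⟨c.unop, d.unop, hcd, hdc⟩, fun h => by
      rcases h with h | h
      · omega
      · omega, hc'.symm⟩
  set ε : ℕ → Rˣ := fun i => if h : i ≤ n then (H i h).choose else 1 with hε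
  have hεspec : ∀ i (h : i ≤ n), ((i = 0 ∨ i = n) → ε i = 1) ∧ y' i = y i * ε i := by
    intro i h
    have := (H i h).choose_spec
    simpa [hε, h] using this
  refine ⟨ε, (hεspec 0 (Nat.zero_le n)).1 (Or.inl rfl), (hεspec n le_rfl).1 (Or.inr rfl), ?_⟩
  intro i h1 hi
  have hi1 : i - 1 ≤ n := le_trans (Nat.sub_le i 1) hi
  have e1 : y' (i - 1) = y (i - 1) * ε (i - 1) := (hεspec (i - 1) hi1).2
  have e2 : y' i = y i * ε i := (hεspec i hi).2
  have key : y (i - 1) * (ε (i - 1) * x' i) = y (i - 1) * (x i * ε i) := by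
    have := hx' i h1 hi
    rw [e1, e2, ← hx i h1 hi] at this
    rw [← mul_assoc, this, mul_assoc]
  have := canc (i - 1) hi1 _ _ key
  calc x' i = ((ε (i - 1))⁻¹ : Rˣ) * (↑(ε (i - 1)) * x' i) := by
        rw [← mul_assoc, Units.inv_mul, one_mul]
    _ = ((ε (i - 1))⁻¹ : Rˣ) * (x i * ε i) := by rw [this]
    _ = ((ε (i - 1))⁻¹ : Rˣ) * x i * (ε i : R) := by rw [mul_assoc]
end

section
/- Let N ≤ M be cyclic right R-modules, π_M : R → M an epimorphism, and ε : N ↪ M the embedding. Then π_M^{-1}(N) ≅ R as right R-modules if and only if there exist a monomorphism λ : R → R and an epimorphism π_N : R → N such that π_M ∘ λ = ε ∘ π_N and λ(ker π_N) = ker π_M. -/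
open Submodule LinearMap Function

/-- `π_M`-exactness: for cyclic right modules `N ≤ M` and a cyclic presentation
`π_M : R → M`, one has `π_M⁻¹(N) ≅ R` iff there are a monomorphism `λ : R → R` and
an epimorphism `π_N : R → N` with `π_M ∘ λ = ε ∘ π_N` and `λ(ker π_N) = ker π_M`. -/
theorem stmt_6 {R : Type*} [Ring R]
    {M : Type*} [AddCommGroup M] [Module Rᵐᵒᵖ M]
    (hMcyc : ∃ m : M, Submodule.span Rᵐᵒᵖ {m} = ⊤)
    (N : Submodule Rᵐᵒᵖ M)
    (hNcyc : ∃ n₀ : M, Submodule.span Rᵐᵒᵖ {n₀} = N)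
    (πM : R →ₗ[Rᵐᵒᵖ] M) (hπM : Surjective πM) :
    Nonempty (↥(Submodule.comap πM N) ≃ₗ[Rᵐᵒᵖ] R) ↔
      ∃ (lam : R →ₗ[Rᵐᵒᵖ] R) (πN : R →ₗ[Rᵐᵒᵖ] ↥N),
        Injective lam ∧ Surjective πN ∧
        πM ∘ₗ lam = N.subtype ∘ₗ πN ∧
        Submodule.map lam (LinearMap.ker πN) = LinearMap.ker πM := by
  constructor
  · rintro ⟨e⟩
    set K := Submodule.comap πM N with hK
    let p : ↥K →ₗ[Rᵐᵒᵖ] ↥N := πM.restrict (fun x hx => hx)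
    refine ⟨K.subtype ∘ₗ (e.symm : R →ₗ[Rᵐᵒᵖ] ↥K), p ∘ₗ (e.symm : R →ₗ[Rᵐᵒᵖ] ↥K),
      K.injective_subtype.comp e.symm.injective, ?_, ?_, ?_⟩
    · rintro ⟨n, hn⟩
      obtain ⟨r, hr⟩ := hπM n
      refine ⟨e ⟨r, show πM r ∈ N by rw [hr]; exact hn⟩, ?_⟩
      simp only [LinearMap.comp_apply, LinearEquiv.coe_coe, LinearEquiv.symm_apply_apply]
      exact Subtype.ext (by simpa [p, LinearMap.restrict_apply] using hr)
    · ext r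
      simp [p, LinearMap.restrict_apply]
    · have hker : LinearMap.ker πM ≤ K := fun x hx => by
        show πM x ∈ N
        rw [show πM x = 0 from hx]; exact N.zero_mem
      ext x
      constructor
      · rintro ⟨y, hy, rfl⟩
        have : πM ((e.symm y : R)) = 0 := by
          have := congrArg (Subtype.val) (show p (e.symm y) = 0 from hy)
          simpa [p, LinearMap.restrict_apply] using this
        simpa using this
      · intro hx
        have hxK : x ∈ K := hker hx
        refine ⟨e ⟨x, hxK⟩, ?_, by simp⟩
        have : p ⟨x, hxK⟩ = 0 := Subtype.ext (by
          simpa [p, LinearMap.restrict_apply] using (show πM x = 0 from hx))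
        simp [LinearMap.mem_ker, this]
  · rintro ⟨lam, πN, hinj, hsurj, hcomm, hker⟩
    have hcomm' : ∀ r, πM (lam r) = (πN r : M) := fun r => LinearMap.ext_iff.mp hcomm r
    have hrange : LinearMap.range lam = Submodule.comap πM N := by
      apply le_antisymm
      · rintro _ ⟨r, rfl⟩
        show πM (lam r) ∈ N
        rw [hcomm' r]; exact (πN r).2
      · intro x hx
        obtain ⟨r, hr⟩ := hsurj ⟨πM x, hx⟩
        have h1 : x - lam r ∈ LinearMap.ker πM := by
          simp only [LinearMap.mem_ker, map_sub, hcomm' r, hr, sub_self]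
        rw [← hker] at h1
        obtain ⟨y, _, hly⟩ := h1
        exact ⟨r + y, by rw [map_add, hly]; abel⟩
    exact ⟨(LinearEquiv.ofEq _ _ hrange.symm).trans
      (LinearEquiv.ofInjective lam hinj).symm⟩
end

section
/- Let c ∈ R be left cancellative and π : R → R/cR the canonical epimorphism. Then π induces an isomorphism of partially ordered sets between the set L(cR, R) of principal right ideals aR with a left cancellative and cR ⊆ aR ⊆ R, and the set of π-exact submodules of R/cR, both ordered by inclusion. -/
open Submodule LinearMap Function

private def auxMulLeft {R : Type*} [Ring R] (a : R) : R →ₗ[Rᵐᵒᵖ] R where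
  toFun x := a * x
  map_add' x y := mul_add a x y
  map_smul' s x := by
    simp [MulOpposite.smul_eq_mul_unop, mul_assoc]

private lemma auxMulLeft_range {R : Type*} [Ring R] (a : R) :
    LinearMap.range (auxMulLeft a) = Submodule.span Rᵐᵒᵖ {a} := by
  ext x
  simp only [LinearMap.mem_range, Submodule.mem_span_singleton]
  constructor
  · rintro ⟨y, hy⟩
    exact ⟨MulOpposite.op y, by simpa [MulOpposite.smul_eq_mul_unop, auxMulLeft] using hy⟩
  · rintro ⟨r, hr⟩
    exact ⟨r.unop, by simpa [MulOpposite.smul_eq_mul_unop, auxMulLeft] using hr⟩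

private noncomputable def auxEquiv {R : Type*} [Ring R] (a : R)
    (ha : ∀ b b' : R, a * b = a * b' → b = b') :
    R ≃ₗ[Rᵐᵒᵖ] ↥(Submodule.span Rᵐᵒᵖ {a}) :=
  (LinearEquiv.ofInjective (auxMulLeft a) (fun x y h => ha x y h)).trans
    (LinearEquiv.ofEq _ _ (auxMulLeft_range a))

private lemma auxCyclic {R : Type*} [Ring R] (h1 : (1 : R) ≠ 0)
    {M : Submodule Rᵐᵒᵖ R} (e : ↥M ≃ₗ[Rᵐᵒᵖ] R) :
    ∃ a : R, (a ≠ 0 ∧ ∀ b b' : R, a * b = a * b' → b = b') ∧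
      M = Submodule.span Rᵐᵒᵖ {a} := by
  set a : R := (e.symm 1 : R) with ha
  have key : ∀ r : R, ((e.symm (MulOpposite.op r • (1 : R)) : M) : R) = a * r := by
    intro r
    rw [map_smul]
    simp [MulOpposite.smul_eq_mul_unop, ha]
  refine ⟨a, ⟨?_, ?_⟩, ?_⟩
  · intro h0
    apply h1
    have : e.symm 1 = 0 := Subtype.ext (by simpa [ha] using h0)
    have := congrArg e this
    simpa using this
  · intro b b' hbb
    have h1' : e.symm (MulOpposite.op b • (1 : R)) = e.symm (MulOpposite.op b' • (1 : R)) := by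
      apply Subtype.ext
      rw [key b, key b', hbb]
    have := congrArg e h1'
    simp only [LinearEquiv.apply_symm_apply, MulOpposite.smul_eq_mul_unop,
      MulOpposite.unop_op, one_mul] at this
    exact this
  · apply le_antisymm
    · intro x hx
      rw [Submodule.mem_span_singleton]
      refine ⟨MulOpposite.op (e ⟨x, hx⟩), ?_⟩
      have := key (e ⟨x, hx⟩)
      simp only [MulOpposite.smul_eq_mul_unop, MulOpposite.unop_op, one_mul] at this ⊢
      rw [← this]
      simp
    · rw [Submodule.span_le, Set.singleton_subset_iff]
      exact (e.symm 1).2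

/-- For `c` left cancellative, the canonical epimorphism `π : R → R/cR` induces an
isomorphism of posets between the principal right ideals `aR` with `a` left
cancellative and `cR ⊆ aR ⊆ R`, and the `π`-exact submodules of `R/cR`, the
isomorphism being given by `I ↦ π(I)`. -/
theorem stmt_9 {R : Type*} [Ring R] (c : R)
    (hc : c ≠ 0 ∧ ∀ b b' : R, c * b = c * b' → b = b') :
    ∃ φ : {I : Submodule Rᵐᵒᵖ R //
            (∃ a : R, (a ≠ 0 ∧ ∀ b b' : R, a * b = a * b' → b = b') ∧
              I = Submodule.span Rᵐᵒᵖ {a}) ∧ Submodule.span Rᵐᵒᵖ {c} ≤ I} ≃o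
         {N : Submodule Rᵐᵒᵖ (R ⧸ Submodule.span Rᵐᵒᵖ {c}) //
            Nonempty (↥(Submodule.comap (Submodule.span Rᵐᵒᵖ {c}).mkQ N) ≃ₗ[Rᵐᵒᵖ] R)},
      ∀ I, (φ I : Submodule Rᵐᵒᵖ (R ⧸ Submodule.span Rᵐᵒᵖ {c})) =
            Submodule.map (Submodule.span Rᵐᵒᵖ {c}).mkQ (I : Submodule Rᵐᵒᵖ R) := by
  classical
  set p : Submodule Rᵐᵒᵖ R := Submodule.span Rᵐᵒᵖ {c} with hp
  have h1 : (1 : R) ≠ 0 := by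
    intro h
    exact hc.1 (by rw [← mul_one c, h, mul_zero])
  have comap_map : ∀ I : Submodule Rᵐᵒᵖ R, p ≤ I →
      Submodule.comap p.mkQ (Submodule.map p.mkQ I) = I := by
    intro I hI
    rw [Submodule.comap_map_eq, Submodule.ker_mkQ, sup_eq_left.mpr hI]
  have map_comap : ∀ N : Submodule Rᵐᵒᵖ (R ⧸ p),
      Submodule.map p.mkQ (Submodule.comap p.mkQ N) = N := by
    intro N
    rw [Submodule.map_comap_eq, Submodule.range_mkQ, top_inf_eq]
  have le_comap : ∀ N : Submodule Rᵐᵒᵖ (R ⧸ p), p ≤ Submodule.comap p.mkQ N := by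
    intro N x hx
    have : p.mkQ x = 0 := by
      rw [Submodule.mkQ_apply, Submodule.Quotient.mk_eq_zero]
      exact hx
    simp [Submodule.mem_comap, this]
  refine ⟨{
    toFun := fun I => ⟨Submodule.map p.mkQ I.1, by
      obtain ⟨⟨a, ⟨ha0, ha⟩, haI⟩, hcI⟩ := I.2
      refine ⟨?_⟩
      rw [comap_map I.1 hcI, haI]
      exact (auxEquiv a ha).symm⟩
    invFun := fun N => ⟨Submodule.comap p.mkQ N.1, by
      obtain ⟨e⟩ := N.2
      obtain ⟨a, ha, hM⟩ := auxCyclic h1 e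
      exact ⟨a, ha, hM⟩, le_comap N.1⟩
    left_inv := fun I => Subtype.ext (comap_map I.1 I.2.2)
    right_inv := fun N => Subtype.ext (map_comap N.1)
    map_rel_iff' := by
      intro I J
      constructor
      · intro h
        have : Submodule.comap p.mkQ (Submodule.map p.mkQ I.1) ≤
            Submodule.comap p.mkQ (Submodule.map p.mkQ J.1) := Submodule.comap_mono h
        rwa [comap_map I.1 I.2.2, comap_map J.1 J.2.2] at this
      · exact fun h => Submodule.map_mono h }, fun I => rfl⟩
end

section
/- Suppose R is a ring such that for every right ideal K, R ⊕ K ≅ R ⊕ R implies K ≅ R (as right R-modules). If M ≅ R/aR with a ∈ R left cancellative and π_M : R → M is any epimorphism, then ker(π_M) = a'R for some left cancellative element a' ∈ R. -/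
open Submodule LinearMap Function

/-- Suppose that `R ⊕ K ≅ R ⊕ R` implies `K ≅ R` for right ideals `K`. If
`M ≅ R/aR` with `a` left cancellative and `π_M : R → M` is an epimorphism, then
`ker π_M = a'R` for some left cancellative `a'`. -/
theorem stmt_10 {R : Type*} [Ring R]
    (hR : ∀ K : Submodule Rᵐᵒᵖ R,
      Nonempty ((R × ↥K) ≃ₗ[Rᵐᵒᵖ] (R × R)) → Nonempty (↥K ≃ₗ[Rᵐᵒᵖ] R))
    {M : Type*} [AddCommGroup M] [Module Rᵐᵒᵖ M]
    (a : R) (ha : a ≠ 0 ∧ ∀ b c : R, a * b = a * c → b = c)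
    (hM : Nonempty (M ≃ₗ[Rᵐᵒᵖ] (R ⧸ Submodule.span Rᵐᵒᵖ {a})))
    (πM : R →ₗ[Rᵐᵒᵖ] M) (hπM : Surjective πM) :
    ∃ a' : R, (a' ≠ 0 ∧ ∀ b c : R, a' * b = a' * c → b = c) ∧
      LinearMap.ker πM = Submodule.span Rᵐᵒᵖ {a'} := by
  obtain ⟨e⟩ := hM
  set A : Submodule Rᵐᵒᵖ R := Submodule.span Rᵐᵒᵖ {a} with hA
  set K : Submodule Rᵐᵒᵖ R := LinearMap.ker πM with hK
  set q : R →ₗ[Rᵐᵒᵖ] (R ⧸ A) := A.mkQ with hq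
  set π : R →ₗ[Rᵐᵒᵖ] (R ⧸ A) := e.toLinearMap ∘ₗ πM with hπ
  have hπsurj : Surjective π := e.surjective.comp hπM
  have hqsurj : Surjective q := Submodule.mkQ_surjective A
  have hkerπ : ∀ x : R, π x = 0 ↔ x ∈ K := by
    intro x
    simp [hπ, hK, LinearMap.mem_ker, e.map_eq_zero_iff]
  have hkerq : ∀ x : R, q x = 0 ↔ x ∈ A := by
    intro x
    rw [← LinearMap.mem_ker, hq, Submodule.ker_mkQ]
  -- right-linearity in multiplication form
  have hπmul : ∀ x y : R, π (x * y) = MulOpposite.op y • π x := by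
    intro x y
    rw [← op_smul_eq_mul, map_smul]
  have hqmul : ∀ x y : R, q (x * y) = MulOpposite.op y • q x := by
    intro x y
    rw [← op_smul_eq_mul, map_smul]
  obtain ⟨x0, hx0⟩ := hπsurj (q 1)
  obtain ⟨y0, hy0⟩ := hqsurj (π 1)
  have hπx0 : ∀ y : R, π (x0 * y) = q y := by
    intro y
    rw [hπmul, hx0, ← map_smul, op_smul_eq_mul, one_mul]
  have hqy0 : ∀ x : R, q (y0 * x) = π x := by
    intro x
    rw [hqmul, hy0, ← map_smul, op_smul_eq_mul, one_mul]
  -- membership helpers for the Schanuel equivalence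
  have memA : ∀ (k : ↥K) (y : R), y - y0 * ((k : R) + x0 * y) ∈ A := by
    intro k y
    rw [← hkerq, map_sub, hqy0, map_add, (hkerπ _).2 k.2, hπx0, zero_add, sub_self]
  have memK : ∀ (s : ↥A) (x : R), x - x0 * ((s : R) + y0 * x) ∈ K := by
    intro s x
    rw [← hkerπ, map_sub, hπx0, map_add, (hkerq _).2 s.2, hqy0, zero_add, sub_self]
  -- the Schanuel equivalence K × R ≃ A × R
  let F : (↥K × R) ≃ₗ[Rᵐᵒᵖ] (↥A × R) :=
  { toFun := fun p => (⟨p.2 - y0 * ((p.1 : R) + x0 * p.2), memA p.1 p.2⟩,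
      (p.1 : R) + x0 * p.2)
    invFun := fun p => (⟨p.2 - x0 * ((p.1 : R) + y0 * p.2), memK p.1 p.2⟩,
      (p.1 : R) + y0 * p.2)
    map_add' := by
      intro p1 p2
      refine Prod.ext (Subtype.ext ?_) ?_ <;>
        simp only [Prod.fst_add, Prod.snd_add, Submodule.coe_add] <;> noncomm_ring
    map_smul' := by
      intro c p
      refine Prod.ext (Subtype.ext ?_) ?_ <;>
        simp only [Prod.smul_fst, Prod.smul_snd, SetLike.val_smul, RingHom.id_apply,
          MulOpposite.smul_eq_mul_unop] <;> noncomm_ring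
    left_inv := by
      intro p
      refine Prod.ext (Subtype.ext ?_) ?_ <;> simp
    right_inv := by
      intro p
      refine Prod.ext (Subtype.ext ?_) ?_ <;> simp }
  -- the equivalence R ≃ A given by left multiplication with a
  have hamem : ∀ r : R, a * r ∈ A := by
    intro r
    rw [← op_smul_eq_mul]
    exact Submodule.smul_mem _ _ (Submodule.mem_span_singleton_self a)
  let Ga : R →ₗ[Rᵐᵒᵖ] ↥A :=
  { toFun := fun r => ⟨a * r, hamem r⟩
    map_add' := by intro r s; exact Subtype.ext (mul_add a r s)
    map_smul' := by
      intro c r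
      refine Subtype.ext ?_
      simp [MulOpposite.smul_eq_mul_unop, mul_assoc] }
  have hGa : Bijective Ga := by
    constructor
    · intro b c h
      exact ha.2 b c (congrArg Subtype.val h)
    · rintro ⟨x, hx⟩
      obtain ⟨c, rfl⟩ := Submodule.mem_span_singleton.1 hx
      exact ⟨c.unop, Subtype.ext (op_smul_eq_mul (a := c.unop) a).symm⟩
  let G : R ≃ₗ[Rᵐᵒᵖ] ↥A := LinearEquiv.ofBijective Ga hGa
  -- assemble R × K ≃ R × R and apply hR
  have htot : Nonempty ((R × ↥K) ≃ₗ[Rᵐᵒᵖ] (R × R)) := by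
    refine ⟨((LinearEquiv.prodComm Rᵐᵒᵖ R ↥K).trans F).trans
      (G.symm.prodCongr (LinearEquiv.refl Rᵐᵒᵖ R))⟩
  obtain ⟨ψ⟩ := hR K htot
  let φ : R ≃ₗ[Rᵐᵒᵖ] ↥K := ψ.symm
  refine ⟨(φ 1 : R), ⟨?_, ?_⟩, ?_⟩
  · -- a' ≠ 0
    intro h
    have h1 : φ 1 = φ 0 := by rw [map_zero]; exact Subtype.ext h
    have h10 : (1 : R) = 0 := φ.injective h1
    exact ha.1 (by rw [← mul_one a, h10, mul_zero])
  · -- cancellation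
    have key : ∀ b : R, (φ b : R) = (φ 1 : R) * b := by
      intro b
      have : φ b = MulOpposite.op b • φ 1 := by
        rw [← map_smul, op_smul_eq_mul, one_mul]
      rw [this]; rfl
    intro b c h
    apply φ.injective
    exact Subtype.ext (by rw [key b, key c, h])
  · -- the kernel is the span
    have key : ∀ b : R, (φ b : R) = (φ 1 : R) * b := by
      intro b
      have : φ b = MulOpposite.op b • φ 1 := by
        rw [← map_smul, op_smul_eq_mul, one_mul]
      rw [this]; rfl
    ext x
    constructor
    · intro hx
      have : x = (φ 1 : R) * (ψ ⟨x, hx⟩) := by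
        rw [← key, LinearEquiv.symm_apply_apply]
      exact Submodule.mem_span_singleton.2
        ⟨MulOpposite.op (ψ ⟨x, hx⟩), by rw [op_smul_eq_mul]; exact this.symm⟩
    · intro hx
      obtain ⟨c, rfl⟩ := Submodule.mem_span_singleton.1 hx
      have : (c : Rᵐᵒᵖ) • (φ 1 : R) = (φ 1 : R) * c.unop := MulOpposite.smul_eq_mul_unop _ _
      rw [this, ← key]
      exact (φ c.unop).2
end

section
/- Let R be a domain. Then the following are equivalent: (1) for every cyclically presented right R-module M and every cyclic presentation π_M : R → M with nonzero kernel, the sum of any two cyclically presented π_M-exact submodules of M is again cyclically presented and π_M-exact; (2) R is a 2-fir, i.e., R is a domain in which the sum of any two principal right ideals with nonzero intersection is again a principal right ideal. -/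
open Submodule LinearMap Function MulOpposite

section Aux
variable {R : Type u} [Ring R] [IsDomain R]

omit [IsDomain R] in
lemma mop_smul (r : Rᵐᵒᵖ) (x : R) : r • x = x * r.unop := rfl

def lmul (c : R) : R →ₗ[Rᵐᵒᵖ] R where
  toFun x := c * x
  map_add' := fun x y => mul_add c x y
  map_smul' r x := by simp only [RingHom.id_apply, mop_smul, mul_assoc]

omit [IsDomain R] in
@[simp] lemma lmul_apply (c x : R) : lmul c x = c * x := rfl

omit [IsDomain R] in
lemma sp_mem {a x : R} : x ∈ span Rᵐᵒᵖ ({a} : Set R) ↔ ∃ r : R, x = a * r := by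
  rw [Submodule.mem_span_singleton]
  exact ⟨fun ⟨r, h⟩ => ⟨r.unop, h.symm⟩, fun ⟨r, h⟩ => ⟨op r, h.symm⟩⟩

omit [IsDomain R] in
lemma lmul_range (c : R) : range (lmul c) = span Rᵐᵒᵖ ({c} : Set R) := by
  ext x
  rw [LinearMap.mem_range, sp_mem]
  exact ⟨fun ⟨r, h⟩ => ⟨r, h.symm⟩, fun ⟨r, h⟩ => ⟨r, h.symm⟩⟩

lemma lmul_inj {c : R} (hc : c ≠ 0) : Injective (lmul c) := fun x y h =>
  mul_left_cancel₀ hc h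

noncomputable def spEquiv (c : R) (hc : c ≠ 0) :
    R ≃ₗ[Rᵐᵒᵖ] ↥(span Rᵐᵒᵖ ({c} : Set R)) :=
  (LinearEquiv.ofInjective (lmul c) (lmul_inj hc)).trans
    (LinearEquiv.ofEq _ _ (lmul_range c))

omit [IsDomain R] in
lemma principal_of_equiv (N : Submodule Rᵐᵒᵖ R) (e : ↥N ≃ₗ[Rᵐᵒᵖ] R) :
    ∃ c : R, N = span Rᵐᵒᵖ ({c} : Set R) := by
  refine ⟨(e.symm 1 : R), ?_⟩
  ext x
  rw [sp_mem]
  constructor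
  · intro hx
    refine ⟨e ⟨x, hx⟩, ?_⟩
    have h : (⟨x, hx⟩ : ↥N) = op (e ⟨x, hx⟩) • e.symm 1 := by
      rw [← map_smul, mop_smul, unop_op, one_mul, e.symm_apply_apply]
    have h2 := congrArg Subtype.val h
    simpa [mop_smul] using h2
  · rintro ⟨r, rfl⟩
    have h : (e.symm 1 : R) * r = ((op r • e.symm 1 : ↥N) : R) := by
      simp [mop_smul]
    rw [h]
    exact (op r • e.symm 1 : ↥N).2

omit [IsDomain R] in
lemma ne_bot_of_mem {P : Submodule Rᵐᵒᵖ R} {x : R} (hx : x ∈ P) (h0 : x ≠ 0) : P ≠ ⊥ :=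
  fun h => h0 (by rwa [h, Submodule.mem_bot] at hx)

omit [IsDomain R] in
lemma map_sp_equiv_quot {M : Type u} [AddCommGroup M] [Module Rᵐᵒᵖ M] (π : R →ₗ[Rᵐᵒᵖ] M)
    (c g : R) (h : ∀ r : R, c * r ∈ ker π ↔ r ∈ span Rᵐᵒᵖ ({g} : Set R)) :
    Nonempty (↥(map π (span Rᵐᵒᵖ ({c} : Set R))) ≃ₗ[Rᵐᵒᵖ] (R ⧸ span Rᵐᵒᵖ ({g} : Set R))) := by
  let f0 : R →ₗ[Rᵐᵒᵖ] M := π ∘ₗ lmul c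
  have hker : ker f0 = span Rᵐᵒᵖ ({g} : Set R) := by
    ext r
    rw [LinearMap.mem_ker]
    show π (c * r) = 0 ↔ _
    rw [← LinearMap.mem_ker]
    exact h r
  have hrange : range f0 = map π (span Rᵐᵒᵖ ({c} : Set R)) := by
    show range (π ∘ₗ lmul c) = _
    rw [LinearMap.range_comp, lmul_range]
  exact ⟨(((Submodule.quotEquivOfEq _ _ hker.symm).trans f0.quotKerEquivRange).trans
    (LinearEquiv.ofEq _ _ hrange)).symm⟩

omit [IsDomain R] in
lemma ker_le_comap' {M : Type u} [AddCommGroup M] [Module Rᵐᵒᵖ M] (π : R →ₗ[Rᵐᵒᵖ] M)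
    (N : Submodule Rᵐᵒᵖ M) : ker π ≤ comap π N := fun x hx =>
  Submodule.mem_comap.2 (by rw [LinearMap.mem_ker.1 hx]; exact N.zero_mem)

omit [IsDomain R] in
lemma comap_sup_of_surj {M : Type u} [AddCommGroup M] [Module Rᵐᵒᵖ M] (π : R →ₗ[Rᵐᵒᵖ] M)
    (hπ : Surjective π) (N₁ N₂ : Submodule Rᵐᵒᵖ M) :
    comap π (N₁ ⊔ N₂) = comap π N₁ ⊔ comap π N₂ := by
  have hr : ∀ N : Submodule Rᵐᵒᵖ M, N ≤ range π := fun N => by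
    rw [range_eq_top.2 hπ]; exact le_top
  have h1 : map π (comap π N₁ ⊔ comap π N₂) = N₁ ⊔ N₂ := by
    rw [Submodule.map_sup, map_comap_eq_self (hr N₁), map_comap_eq_self (hr N₂)]
  calc comap π (N₁ ⊔ N₂) = comap π (map π (comap π N₁ ⊔ comap π N₂)) := by rw [h1]
    _ = (comap π N₁ ⊔ comap π N₂) ⊔ ker π := Submodule.comap_map_eq π _
    _ = comap π N₁ ⊔ comap π N₂ :=
        sup_eq_left.2 (le_trans (ker_le_comap' π N₁) le_sup_left)

variable (H : ∀ a b : R, a ≠ 0 → b ≠ 0 →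
      Submodule.span Rᵐᵒᵖ {a} ⊓ Submodule.span Rᵐᵒᵖ {b} ≠ ⊥ →
      ∃ c : R, Submodule.span Rᵐᵒᵖ {a} ⊔ Submodule.span Rᵐᵒᵖ {b} =
        Submodule.span Rᵐᵒᵖ {c})

include H in
lemma inter_principal (a b : R) (ha : a ≠ 0) (hb : b ≠ 0)
    (hne : span Rᵐᵒᵖ ({a} : Set R) ⊓ span Rᵐᵒᵖ ({b} : Set R) ≠ ⊥) :
    ∃ m : R, span Rᵐᵒᵖ ({a} : Set R) ⊓ span Rᵐᵒᵖ ({b} : Set R) = span Rᵐᵒᵖ ({m} : Set R) := by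
  obtain ⟨c, hc⟩ := H a b ha hb hne
  have hac : a ∈ span Rᵐᵒᵖ ({c} : Set R) := by
    rw [← hc]; exact Submodule.mem_sup_left (Submodule.mem_span_singleton_self a)
  have hbc : b ∈ span Rᵐᵒᵖ ({c} : Set R) := by
    rw [← hc]; exact Submodule.mem_sup_right (Submodule.mem_span_singleton_self b)
  obtain ⟨a₁, ha₁⟩ := sp_mem.1 hac
  obtain ⟨b₁, hb₁⟩ := sp_mem.1 hbc
  have hcsup : c ∈ span Rᵐᵒᵖ ({a} : Set R) ⊔ span Rᵐᵒᵖ ({b} : Set R) := by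
    rw [hc]; exact Submodule.mem_span_singleton_self c
  obtain ⟨x, hx, y, hy, hxy⟩ := Submodule.mem_sup.1 hcsup
  obtain ⟨p, rfl⟩ := sp_mem.1 hx
  obtain ⟨q, rfl⟩ := sp_mem.1 hy
  have hc0 : c ≠ 0 := by rintro rfl; exact ha (by simpa using ha₁)
  have key : a₁ * p + b₁ * q = 1 := by
    apply mul_left_cancel₀ hc0
    rw [mul_one, mul_add, ← mul_assoc, ← mul_assoc, ← ha₁, ← hb₁, hxy]
  set z := b * q * a₁ with hz_def
  set w := a * p * b₁ with hw_def
  have hbq : b * q = c - a * p := by rw [← hxy]; noncomm_ring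
  have hap : a * p = c - b * q := by rw [← hxy]; noncomm_ring
  have hz2 : z = a * (1 - p * a₁) := by
    rw [hz_def, hbq, sub_mul, ← ha₁, mul_sub, mul_one, mul_assoc]
  have hw2 : w = b * (1 - q * b₁) := by
    rw [hw_def, hap, sub_mul, ← hb₁, mul_sub, mul_one, mul_assoc]
  have hzmemA : z ∈ span Rᵐᵒᵖ ({a} : Set R) := sp_mem.2 ⟨_, hz2⟩
  have hzmemB : z ∈ span Rᵐᵒᵖ ({b} : Set R) := sp_mem.2 ⟨q * a₁, by rw [hz_def, mul_assoc]⟩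
  have hwmemA : w ∈ span Rᵐᵒᵖ ({a} : Set R) := sp_mem.2 ⟨p * b₁, by rw [hw_def, mul_assoc]⟩
  have hwmemB : w ∈ span Rᵐᵒᵖ ({b} : Set R) := sp_mem.2 ⟨_, hw2⟩
  have hint : span Rᵐᵒᵖ ({a} : Set R) ⊓ span Rᵐᵒᵖ ({b} : Set R)
      = span Rᵐᵒᵖ ({z} : Set R) ⊔ span Rᵐᵒᵖ ({w} : Set R) := by
    apply le_antisymm
    · rintro t ⟨hta, htb⟩
      obtain ⟨r, rfl⟩ := sp_mem.1 hta
      obtain ⟨s, hs⟩ := sp_mem.1 htb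
      have hab : a₁ * r = b₁ * s := by
        apply mul_left_cancel₀ hc0
        rw [← mul_assoc, ← mul_assoc, ← ha₁, ← hb₁, ← hs]
      have hzr : z * r = b * (q * (a₁ * r)) := by rw [hz_def]; noncomm_ring
      have hws : w * s = a * (p * (b₁ * s)) := by rw [hw_def]; noncomm_ring
      have hone : (a₁ * p + b₁ * q) * (a₁ * r) = a₁ * r := by rw [key, one_mul]
      have ht : z * r + w * s = a * r := by
        rw [hzr, hws, ← hab, ha₁, hb₁]
        calc c * b₁ * (q * (a₁ * r)) + c * a₁ * (p * (a₁ * r))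
            = c * ((a₁ * p + b₁ * q) * (a₁ * r)) := by noncomm_ring
          _ = c * (a₁ * r) := by rw [hone]
          _ = c * a₁ * r := by rw [mul_assoc]
      rw [← ht]
      exact Submodule.add_mem _ (Submodule.mem_sup_left (sp_mem.2 ⟨r, rfl⟩))
        (Submodule.mem_sup_right (sp_mem.2 ⟨s, rfl⟩))
    · apply sup_le
      · rw [Submodule.span_le, Set.singleton_subset_iff]
        exact ⟨hzmemA, hzmemB⟩
      · rw [Submodule.span_le, Set.singleton_subset_iff]
        exact ⟨hwmemA, hwmemB⟩
  by_cases hz0 : z = 0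
  · exact ⟨w, by rw [hint, hz0, Submodule.span_singleton_eq_bot.2 rfl, bot_sup_eq]⟩
  by_cases hw0 : w = 0
  · exact ⟨z, by rw [hint, hw0, Submodule.span_singleton_eq_bot.2 rfl, sup_bot_eq]⟩
  have hq0 : q ≠ 0 := by rintro rfl; exact hz0 (by simp [hz_def])
  have hp0 : p ≠ 0 := by rintro rfl; exact hw0 (by simp [hw_def])
  have h1 : a₁ * p = 1 - b₁ * q := by rw [← key]; noncomm_ring
  have hzw : z * p = w * q := by
    have e1 : z * p = b * (q * (a₁ * p)) := by rw [hz_def]; noncomm_ring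
    have e2 : w * q = c * ((a₁ * p) * (b₁ * q)) := by rw [hw_def, ha₁]; noncomm_ring
    rw [e1, e2, h1, hb₁]
    noncomm_ring
  have hzp0 : z * p ≠ 0 := mul_ne_zero hz0 hp0
  have hne2 : span Rᵐᵒᵖ ({z} : Set R) ⊓ span Rᵐᵒᵖ ({w} : Set R) ≠ ⊥ :=
    ne_bot_of_mem ⟨sp_mem.2 ⟨p, rfl⟩, sp_mem.2 ⟨q, hzw⟩⟩ hzp0
  obtain ⟨m, hm⟩ := H z w hz0 hw0 hne2
  exact ⟨m, by rw [hint, hm]⟩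

include H in
lemma sp_conductor (a b : R) (ha : a ≠ 0) (hb : b ≠ 0)
    (hne : span Rᵐᵒᵖ ({a} : Set R) ⊓ span Rᵐᵒᵖ ({b} : Set R) ≠ ⊥) :
    ∃ g : R, ∀ r : R, a * r ∈ span Rᵐᵒᵖ ({b} : Set R) ↔ r ∈ span Rᵐᵒᵖ ({g} : Set R) := by
  obtain ⟨m, hm⟩ := inter_principal H a b ha hb hne
  have hma : m ∈ span Rᵐᵒᵖ ({a} : Set R) := by
    have hmm : m ∈ span Rᵐᵒᵖ ({a} : Set R) ⊓ span Rᵐᵒᵖ ({b} : Set R) := by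
      rw [hm]; exact Submodule.mem_span_singleton_self m
    exact hmm.1
  obtain ⟨g, hg⟩ := sp_mem.1 hma
  refine ⟨g, fun r => ⟨fun hr => ?_, fun hr => ?_⟩⟩
  · have hmem : a * r ∈ span Rᵐᵒᵖ ({m} : Set R) := by
      rw [← hm]; exact ⟨sp_mem.2 ⟨r, rfl⟩, hr⟩
    obtain ⟨s, hs⟩ := sp_mem.1 hmem
    rw [hg, mul_assoc] at hs
    exact sp_mem.2 ⟨s, mul_left_cancel₀ ha hs⟩
  · obtain ⟨s, rfl⟩ := sp_mem.1 hr
    have hmem : a * (g * s) ∈ span Rᵐᵒᵖ ({m} : Set R) := sp_mem.2 ⟨s, by rw [hg, mul_assoc]⟩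
    rw [← hm] at hmem
    exact hmem.2

end Aux

/-- For a domain `R`, the set of cyclically presented `π_M`-exact submodules of any
cyclically presented module `M` (with cyclic presentation having nonzero kernel) is
closed under finite sums iff `R` is a 2-fir (Cohn's characterization: a domain in
which the sum of two principal right ideals with nonzero intersection is principal). -/
theorem stmt_12 {R : Type u} [Ring R] [IsDomain R] :
    (∀ (M : Type u) [AddCommGroup M] [Module Rᵐᵒᵖ M]
      (πM : R →ₗ[Rᵐᵒᵖ] M), Surjective πM → LinearMap.ker πM ≠ ⊥ →
      (∃ a : R, Nonempty (M ≃ₗ[Rᵐᵒᵖ] (R ⧸ Submodule.span Rᵐᵒᵖ {a}))) →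
      ∀ N₁ N₂ : Submodule Rᵐᵒᵖ M,
        (∃ b : R, Nonempty (↥N₁ ≃ₗ[Rᵐᵒᵖ] (R ⧸ Submodule.span Rᵐᵒᵖ {b}))) →
        Nonempty (↥(Submodule.comap πM N₁) ≃ₗ[Rᵐᵒᵖ] R) →
        (∃ b : R, Nonempty (↥N₂ ≃ₗ[Rᵐᵒᵖ] (R ⧸ Submodule.span Rᵐᵒᵖ {b}))) →
        Nonempty (↥(Submodule.comap πM N₂) ≃ₗ[Rᵐᵒᵖ] R) →
        ((∃ b : R, Nonempty (↥(N₁ ⊔ N₂) ≃ₗ[Rᵐᵒᵖ] (R ⧸ Submodule.span Rᵐᵒᵖ {b}))) ∧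
          Nonempty (↥(Submodule.comap πM (N₁ ⊔ N₂)) ≃ₗ[Rᵐᵒᵖ] R))) ↔
    (∀ a b : R, a ≠ 0 → b ≠ 0 →
      Submodule.span Rᵐᵒᵖ {a} ⊓ Submodule.span Rᵐᵒᵖ {b} ≠ ⊥ →
      ∃ c : R, Submodule.span Rᵐᵒᵖ {a} ⊔ Submodule.span Rᵐᵒᵖ {b} =
        Submodule.span Rᵐᵒᵖ {c}) := by
  constructor
  · -- (1) → (2)
    intro H1 a b ha hb hne
    obtain ⟨d, hdmem, hd0⟩ := Submodule.exists_mem_ne_zero_of_ne_bot hne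
    obtain ⟨a₁, ha₁⟩ := sp_mem.1 hdmem.1
    obtain ⟨b₁, hb₁⟩ := sp_mem.1 hdmem.2
    set D := Submodule.span Rᵐᵒᵖ ({d} : Set R) with hD
    have hDbot : D ≠ ⊥ := fun h => hd0 (Submodule.span_singleton_eq_bot.1 h)
    have hkerD : ker D.mkQ = D := Submodule.ker_mkQ D
    have hDa : D ≤ span Rᵐᵒᵖ ({a} : Set R) := by
      rw [hD, Submodule.span_le, Set.singleton_subset_iff]; exact hdmem.1
    have hDb : D ≤ span Rᵐᵒᵖ ({b} : Set R) := by
      rw [hD, Submodule.span_le, Set.singleton_subset_iff]; exact hdmem.2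
    set N₁ := map D.mkQ (span Rᵐᵒᵖ ({a} : Set R)) with hN₁
    set N₂ := map D.mkQ (span Rᵐᵒᵖ ({b} : Set R)) with hN₂
    -- cyclic presentations of N₁, N₂
    have hcond1 : ∀ r : R, a * r ∈ ker D.mkQ ↔ r ∈ span Rᵐᵒᵖ ({a₁} : Set R) := by
      intro r
      rw [hkerD, hD]
      constructor
      · intro hr
        obtain ⟨s, hs⟩ := sp_mem.1 hr
        rw [ha₁, mul_assoc] at hs
        exact sp_mem.2 ⟨s, mul_left_cancel₀ ha hs⟩
      · intro hr
        obtain ⟨s, rfl⟩ := sp_mem.1 hr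
        exact sp_mem.2 ⟨s, by rw [ha₁, mul_assoc]⟩
    have hcond2 : ∀ r : R, b * r ∈ ker D.mkQ ↔ r ∈ span Rᵐᵒᵖ ({b₁} : Set R) := by
      intro r
      rw [hkerD, hD]
      constructor
      · intro hr
        obtain ⟨s, hs⟩ := sp_mem.1 hr
        rw [hb₁, mul_assoc] at hs
        exact sp_mem.2 ⟨s, mul_left_cancel₀ hb hs⟩
      · intro hr
        obtain ⟨s, rfl⟩ := sp_mem.1 hr
        exact sp_mem.2 ⟨s, by rw [hb₁, mul_assoc]⟩
    have hcomap1 : comap D.mkQ N₁ = span Rᵐᵒᵖ ({a} : Set R) := by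
      rw [hN₁, Submodule.comap_map_eq, hkerD]
      exact sup_eq_left.2 hDa
    have hcomap2 : comap D.mkQ N₂ = span Rᵐᵒᵖ ({b} : Set R) := by
      rw [hN₂, Submodule.comap_map_eq, hkerD]
      exact sup_eq_left.2 hDb
    have hres := H1 (R ⧸ D) D.mkQ D.mkQ_surjective (by rwa [hkerD])
      ⟨d, ⟨LinearEquiv.refl _ _⟩⟩ N₁ N₂
      ⟨a₁, map_sp_equiv_quot D.mkQ a a₁ hcond1⟩
      ⟨(LinearEquiv.ofEq _ _ hcomap1).trans (spEquiv a ha).symm⟩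
      ⟨b₁, map_sp_equiv_quot D.mkQ b b₁ hcond2⟩
      ⟨(LinearEquiv.ofEq _ _ hcomap2).trans (spEquiv b hb).symm⟩
    obtain ⟨-, ⟨esum⟩⟩ := hres
    have hcomap12 : comap D.mkQ (N₁ ⊔ N₂)
        = span Rᵐᵒᵖ ({a} : Set R) ⊔ span Rᵐᵒᵖ ({b} : Set R) := by
      rw [comap_sup_of_surj D.mkQ D.mkQ_surjective, hcomap1, hcomap2]
    exact principal_of_equiv _ ((LinearEquiv.ofEq _ _ hcomap12.symm).trans esum)
  · -- (2) → (1)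
    intro H M _ _ πM hsurj hker hMcp N₁ N₂ hcp1 hex1 hcp2 hex2
    obtain ⟨a, ⟨eM⟩⟩ := hMcp
    obtain ⟨e1⟩ := hex1
    obtain ⟨e2⟩ := hex2
    obtain ⟨c₁, hc₁⟩ := principal_of_equiv _ e1
    obtain ⟨c₂, hc₂⟩ := principal_of_equiv _ e2
    have hk1 : ker πM ≤ span Rᵐᵒᵖ ({c₁} : Set R) := hc₁ ▸ ker_le_comap' πM N₁
    have hk2 : ker πM ≤ span Rᵐᵒᵖ ({c₂} : Set R) := hc₂ ▸ ker_le_comap' πM N₂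
    obtain ⟨r₀, hr₀mem, hr₀⟩ := Submodule.exists_mem_ne_zero_of_ne_bot hker
    have hc₁0 : c₁ ≠ 0 := by
      rintro rfl
      obtain ⟨s, hs⟩ := sp_mem.1 (hk1 hr₀mem)
      exact hr₀ (by rw [hs, zero_mul])
    have hc₂0 : c₂ ≠ 0 := by
      rintro rfl
      obtain ⟨s, hs⟩ := sp_mem.1 (hk2 hr₀mem)
      exact hr₀ (by rw [hs, zero_mul])
    have hne12 : span Rᵐᵒᵖ ({c₁} : Set R) ⊓ span Rᵐᵒᵖ ({c₂} : Set R) ≠ ⊥ :=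
      ne_bot_of_mem ⟨hk1 hr₀mem, hk2 hr₀mem⟩ hr₀
    obtain ⟨c, hc⟩ := H c₁ c₂ hc₁0 hc₂0 hne12
    have hc0 : c ≠ 0 := by
      rintro rfl
      have : c₁ ∈ span Rᵐᵒᵖ ({(0 : R)} : Set R) := by
        rw [← hc]; exact Submodule.mem_sup_left (Submodule.mem_span_singleton_self c₁)
      obtain ⟨s, hs⟩ := sp_mem.1 this
      exact hc₁0 (by rw [hs, zero_mul])
    have hcomap : comap πM (N₁ ⊔ N₂) = span Rᵐᵒᵖ ({c} : Set R) := by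
      rw [comap_sup_of_surj πM hsurj, hc₁, hc₂, hc]
    refine ⟨?_, ⟨(LinearEquiv.ofEq _ _ hcomap).trans (spEquiv c hc0).symm⟩⟩
    -- kernel of πM is principal
    have hkerprin : ∃ e : R, e ≠ 0 ∧ ker πM = span Rᵐᵒᵖ ({e} : Set R) := by
      let ψ : (R ⧸ ker πM) ≃ₗ[Rᵐᵒᵖ] (R ⧸ span Rᵐᵒᵖ ({a} : Set R)) :=
        (LinearMap.quotKerEquivOfSurjective πM hsurj).trans eM
      obtain ⟨u, hu⟩ := Submodule.mkQ_surjective _ (ψ ((ker πM).mkQ 1))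
      have hchar : ∀ r : R, r ∈ ker πM ↔ u * r ∈ span Rᵐᵒᵖ ({a} : Set R) := by
        intro r
        have h1 : (ker πM).mkQ r = op r • (ker πM).mkQ 1 := by
          rw [← map_smul, mop_smul, unop_op, one_mul]
        have h2 : ψ ((ker πM).mkQ r) = (span Rᵐᵒᵖ ({a} : Set R)).mkQ (u * r) := by
          rw [h1, map_smul, ← hu, ← map_smul, mop_smul, unop_op]
        constructor
        · intro hr
          have : (ker πM).mkQ r = 0 := by
            rwa [Submodule.mkQ_apply, Submodule.Quotient.mk_eq_zero]
          rw [this, map_zero] at h2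
          rwa [Submodule.mkQ_apply, eq_comm, Submodule.Quotient.mk_eq_zero] at h2
        · intro hr
          have : (span Rᵐᵒᵖ ({a} : Set R)).mkQ (u * r) = 0 := by
            rwa [Submodule.mkQ_apply, Submodule.Quotient.mk_eq_zero]
          rw [this] at h2
          have h3 := ψ.map_eq_zero_iff.1 h2
          rwa [Submodule.mkQ_apply, Submodule.Quotient.mk_eq_zero] at h3
      by_cases hu0 : u = 0
      · refine ⟨1, one_ne_zero, ?_⟩
        ext r
        rw [hchar, hu0, zero_mul]
        exact ⟨fun _ => sp_mem.2 ⟨r, (one_mul r).symm⟩, fun _ => Submodule.zero_mem _⟩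
      · have ha0 : a ≠ 0 := by
          rintro rfl
          apply hker
          rw [eq_bot_iff]
          intro r hr
          have h4 := (hchar r).1 hr
          rw [Submodule.span_zero_singleton, Submodule.mem_bot] at h4
          rcases mul_eq_zero.1 h4 with h | h
          · exact absurd h hu0
          · exact Submodule.mem_bot _ |>.2 h
        have hneua : span Rᵐᵒᵖ ({u} : Set R) ⊓ span Rᵐᵒᵖ ({a} : Set R) ≠ ⊥ :=
          ne_bot_of_mem ⟨sp_mem.2 ⟨r₀, rfl⟩, (hchar r₀).1 hr₀mem⟩
            (mul_ne_zero hu0 hr₀)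
        obtain ⟨e, he⟩ := sp_conductor H u a hu0 ha0 hneua
        have hkere : ker πM = span Rᵐᵒᵖ ({e} : Set R) := by
          ext r; rw [hchar, he]
        refine ⟨e, fun h0 => hker ?_, hkere⟩
        rw [hkere, h0, Submodule.span_zero_singleton]
    obtain ⟨e, he0, hkere⟩ := hkerprin
    have hec : e ∈ span Rᵐᵒᵖ ({c} : Set R) := by
      have h5 : e ∈ ker πM := by
        rw [hkere]; exact Submodule.mem_span_singleton_self e
      have h6 := hk1 h5
      rw [← hc]
      exact Submodule.mem_sup_left h6
    have hnece : span Rᵐᵒᵖ ({c} : Set R) ⊓ span Rᵐᵒᵖ ({e} : Set R) ≠ ⊥ :=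
      ne_bot_of_mem ⟨hec, Submodule.mem_span_singleton_self e⟩ he0
    obtain ⟨g, hg⟩ := sp_conductor H c e hc0 he0 hnece
    have hcond : ∀ r : R, c * r ∈ ker πM ↔ r ∈ span Rᵐᵒᵖ ({g} : Set R) := by
      intro r; rw [hkere]; exact hg r
    have hmap : N₁ ⊔ N₂ = map πM (span Rᵐᵒᵖ ({c} : Set R)) := by
      rw [← hcomap]
      exact (map_comap_eq_self (by rw [range_eq_top.2 hsurj]; exact le_top)).symm
    obtain ⟨eq⟩ := map_sp_equiv_quot πM c g hcond
    exact ⟨g, ⟨(LinearEquiv.ofEq _ _ hmap).trans eq⟩⟩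
end

section
/- Let R be a ring with Jacobson radical J(R). Then every cyclically presented right R-module has a projective cover if and only if R/J(R) is Von Neumann regular and idempotents can be lifted modulo J(R). -/
open Submodule LinearMap Function

/-- `M` has a projective cover: an epimorphism `p : P → M` with `P` projective and
`ker p` superfluous (small) in `P`. -/
def HasProjectiveCover (S : Type u) [Ring S] (M : Type v) [AddCommGroup M]
    [Module S M] : Prop :=
  ∃ (P : Type u) (_ : AddCommGroup P) (_ : Module S P) (p : P →ₗ[S] M),
    Module.Projective S P ∧ Function.Surjective p ∧
    ∀ L : Submodule S P, LinearMap.ker p ⊔ L = ⊤ → L = ⊤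

/-- The Jacobson radical of `R`, as a set: `x ∈ J(R)` iff `1 - x y` is a unit for all `y`. -/
def jacobsonRadicalSet (R : Type u) [Ring R] : Set R :=
  {x : R | ∀ y : R, IsUnit (1 - x * y)}

section Jac
variable {A : Type u} [Ring A]

lemma isUnit_one_sub_swap {a b : A} (h : IsUnit (1 - a * b)) : IsUnit (1 - b * a) := by
  obtain ⟨u, hu⟩ := h
  have h1 : (1 - a * b) * (↑u⁻¹ : A) = 1 := by rw [← hu]; exact u.mul_inv
  have h2 : (↑u⁻¹ : A) * (1 - a * b) = 1 := by rw [← hu]; exact u.inv_mul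
  set v : A := (↑u⁻¹ : A)
  have key1 : (1 - b * a) * (1 + b * v * a) = 1 + b * (((1 - a * b) * v) - 1) * a := by
    noncomm_ring
  have key2 : (1 + b * v * a) * (1 - b * a) = 1 + b * ((v * (1 - a * b)) - 1) * a := by
    noncomm_ring
  rw [h1] at key1; rw [h2] at key2
  simp only [sub_self, mul_zero, zero_mul, add_zero] at key1 key2
  exact ⟨⟨1 - b * a, 1 + b * v * a, key1, key2⟩, rfl⟩

lemma mem_jac_iff_left {x : A} :
    x ∈ jacobsonRadicalSet A ↔ ∀ y : A, IsUnit (1 - y * x) :=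
  ⟨fun h y => isUnit_one_sub_swap (h y), fun h y => isUnit_one_sub_swap (h y)⟩

lemma jac_mul_right {x : A} (hx : x ∈ jacobsonRadicalSet A) (r : A) :
    x * r ∈ jacobsonRadicalSet A := fun y => by
  rw [mul_assoc]; exact hx (r * y)

lemma jac_mul_left {x : A} (hx : x ∈ jacobsonRadicalSet A) (r : A) :
    r * x ∈ jacobsonRadicalSet A := by
  rw [mem_jac_iff_left]
  intro y
  rw [← mul_assoc]
  exact mem_jac_iff_left.1 hx (y * r)

lemma jac_neg {x : A} (hx : x ∈ jacobsonRadicalSet A) : -x ∈ jacobsonRadicalSet A := fun y => by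
  have := hx (-y)
  simpa [mul_neg, neg_mul] using this

lemma jac_add {x y : A} (hx : x ∈ jacobsonRadicalSet A) (hy : y ∈ jacobsonRadicalSet A) :
    x + y ∈ jacobsonRadicalSet A := by
  intro z
  obtain ⟨u, hu⟩ := hx z
  set v : A := (↑u⁻¹ : A)
  have hv : v * (1 - x * z) = 1 := by rw [← hu]; exact u.inv_mul
  have key : (1 - y * (z * v)) * (1 - x * z)
      = 1 - (x + y) * z - y * (z * ((v * (1 - x * z)) - 1)) := by noncomm_ring
  rw [hv] at key
  simp only [sub_self, mul_zero, sub_zero] at key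
  rw [← key]
  exact ((hy (z * v)).mul (hx z))

lemma jac_sub {x y : A} (hx : x ∈ jacobsonRadicalSet A) (hy : y ∈ jacobsonRadicalSet A) :
    x - y ∈ jacobsonRadicalSet A := by
  rw [sub_eq_add_neg]; exact jac_add hx (jac_neg hy)

lemma jac_of_leftinv {x : A} (H : ∀ y : A, ∃ z : A, z * (1 - y * x) = 1) :
    x ∈ jacobsonRadicalSet A := by
  rw [mem_jac_iff_left]
  intro y
  obtain ⟨z, hz⟩ := H y
  obtain ⟨w, hw⟩ := H (-(z * y))
  have hz' : z = 1 + z * (y * x) := by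
    have h := hz
    have e : z * (1 - y * x) = z - z * (y * x) := by noncomm_ring
    rw [e] at h
    exact eq_add_of_sub_eq h
  have hwz : w * z = 1 := by
    have e : 1 - -(z * y) * x = 1 + z * (y * x) := by noncomm_ring
    rw [e] at hw
    rw [hz']; exact hw
  have hwval : w = 1 - y * x := by
    calc w = w * (z * (1 - y * x)) := by rw [hz, mul_one]
      _ = (w * z) * (1 - y * x) := by rw [mul_assoc]
      _ = 1 - y * x := by rw [hwz, one_mul]
  exact ⟨⟨1 - y * x, z, by rw [← hwval]; exact hwz, hz⟩, rfl⟩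
end Jac

section Star

variable {A : Type u} [Ring A]

/-- the intermediate condition -/
def StarCond (A : Type u) [Ring A] : Prop :=
  ∀ a : A, ∃ f : A, f * f = f ∧ f ∈ Submodule.span A {a} ∧
    a - a * f ∈ jacobsonRadicalSet A

lemma mul_idem_of_mem_span {g x : A} (hg : g * g = g) (hx : x ∈ Submodule.span A {g}) :
    x * g = x := by
  obtain ⟨c, hc⟩ := Submodule.mem_span_singleton.1 hx
  rw [smul_eq_mul] at hc
  rw [← hc, mul_assoc, hg]

lemma star_to_cover (h : StarCond A) (a : A) :
    HasProjectiveCover A (A ⧸ Submodule.span A {a}) := by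
  obtain ⟨f, hff, hfmem, hjac⟩ := h a
  set g : A := 1 - f with hgdef
  have hgg : g * g = g := by
    have : (1 - f) * (1 - f) = 1 - f - f + f * f := by noncomm_ring
    rw [hgdef, this, hff]; abel
  have hmemg : ∀ x : A, x * g ∈ Submodule.span A {g} := fun x =>
    Submodule.mem_span_singleton.2 ⟨x, by rw [smul_eq_mul]⟩
  set P := ↥(Submodule.span A {g}) with hP
  set p : P →ₗ[A] (A ⧸ Submodule.span A {a}) :=
    (Submodule.span A {a}).mkQ.comp (Submodule.span A {g}).subtype with hpdef
  refine ⟨P, inferInstance, inferInstance, p, ?_, ?_, ?_⟩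
  · -- projective
    refine Module.Projective.of_split (M := A) (Submodule.span A {g}).subtype
      { toFun := fun x => ⟨x * g, hmemg x⟩
        map_add' := fun x y => Subtype.ext (add_mul x y g)
        map_smul' := fun c x => Subtype.ext (mul_assoc c x g) } ?_
    refine LinearMap.ext fun x => Subtype.ext ?_
    show (x : A) * g = (x : A)
    exact mul_idem_of_mem_span hgg x.2
  · -- surjective
    intro m
    obtain ⟨x, rfl⟩ := Submodule.mkQ_surjective _ m
    refine ⟨⟨x * g, hmemg x⟩, ?_⟩
    show Submodule.Quotient.mk (x * g) = Submodule.Quotient.mk x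
    rw [Submodule.Quotient.eq]
    have : x * g - x = -(x * f) := by rw [hgdef]; noncomm_ring
    rw [this]
    exact neg_mem (Submodule.smul_mem _ x hfmem)
  · -- smallness
    intro L hL
    have hgP : (⟨g, Submodule.mem_span_singleton_self g⟩ : P) ∈ LinearMap.ker p ⊔ L := by
      rw [hL]; trivial
    obtain ⟨k, hk, l, hl, hkl⟩ := Submodule.mem_sup.1 hgP
    have hkv : (k : A) ∈ Submodule.span A {a} := by
      have : p k = 0 := hk
      rwa [hpdef, LinearMap.comp_apply, Submodule.mkQ_apply, Submodule.Quotient.mk_eq_zero]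
        at this
    have hkg : (k : A) * g = (k : A) := mul_idem_of_mem_span hgg k.2
    have hkJ : (k : A) ∈ jacobsonRadicalSet A := by
      obtain ⟨c, hc⟩ := Submodule.mem_span_singleton.1 hkv
      rw [smul_eq_mul] at hc
      have : (k : A) = c * (a - a * f) := by
        rw [← hkg, ← hc, hgdef, mul_assoc]; noncomm_ring
      rw [this]
      exact jac_mul_left hjac c
    have hsum : (k : A) + (l : A) = g := congrArg Subtype.val hkl
    have hlval : (1 - (k : A)) * g = (l : A) := by
      have e : (1 - (k : A)) * g = ((k : A) + g) - (k:A) - (k : A) * g := by noncomm_ring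
      have hls : (l : A) = g - (k : A) := eq_sub_of_add_eq' hsum
      rw [e, hkg, hls]; abel
    have hku : IsUnit (1 - (k : A)) := by simpa using hkJ 1
    obtain ⟨u, hu⟩ := hku
    have hg_l : g = (↑u⁻¹ : A) * (l : A) := by
      rw [← hlval, ← hu, ← mul_assoc, u.inv_mul, one_mul]
    have hgPL : (⟨g, Submodule.mem_span_singleton_self g⟩ : P) ∈ L := by
      have e : (⟨g, Submodule.mem_span_singleton_self g⟩ : P) = (↑u⁻¹ : A) • l :=
        Subtype.ext hg_l
      rw [e]; exact L.smul_mem _ hl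
    rw [eq_top_iff]
    rintro x -
    obtain ⟨c, hc⟩ := Submodule.mem_span_singleton.1 x.2
    have e : x = c • (⟨g, Submodule.mem_span_singleton_self g⟩ : P) :=
      Subtype.ext hc.symm
    rw [e]; exact L.smul_mem _ hgPL

lemma cover_to_star (h : ∀ a : A, HasProjectiveCover A (A ⧸ Submodule.span A {a})) :
    StarCond A := by
  intro a
  obtain ⟨P, iA, iM, p, hproj, hsurj, hsm⟩ := h a
  letI := iA; letI := iM
  obtain ⟨q, hq⟩ := hsurj (Submodule.Quotient.mk 1)
  set h0 : A →ₗ[A] P := LinearMap.toSpanSingleton A P q with hh0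
  have hph : ∀ s : A, p (h0 s) = Submodule.Quotient.mk s := by
    intro s
    have e : h0 s = s • q := rfl
    rw [e, map_smul, hq, ← Submodule.Quotient.mk_smul, smul_eq_mul, mul_one]
  have hrange : LinearMap.range h0 = ⊤ := by
    apply hsm
    rw [eq_top_iff]
    rintro x -
    obtain ⟨s, hs⟩ := Submodule.Quotient.mk_surjective _ (p x)
    refine Submodule.mem_sup.2 ⟨x - h0 s, ?_, h0 s, ⟨s, rfl⟩, by abel⟩
    rw [LinearMap.mem_ker, map_sub, hph, hs, sub_self]
  have hsurj0 : Surjective h0 := LinearMap.range_eq_top.1 hrange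
  obtain ⟨σ, hσ⟩ := Module.projective_lifting_property h0 LinearMap.id hsurj0
  have hhσ : ∀ x : P, h0 (σ x) = x := fun x => DFunLike.congr_fun hσ x
  set r : A := σ (h0 1) with hr0
  have hπ : ∀ s : A, σ (h0 s) = s * r := by
    intro s
    have e : h0 s = s • h0 1 := by rw [← map_smul, smul_eq_mul, mul_one]
    rw [e, map_smul, smul_eq_mul, ← hr0]
  have hr : r * r = r := by
    have h1 : σ (h0 r) = r * r := hπ r
    have h2 : h0 r = h0 1 := by rw [hr0]; exact hhσ (h0 1)
    rw [h2, ← hr0] at h1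
    exact h1.symm
  set f : A := 1 - r with hfdef
  have hff : f * f = f := by
    have e : (1 - r) * (1 - r) = 1 - r - r + r * r := by noncomm_ring
    rw [hfdef, e, hr]; abel
  have hh0f : h0 f = 0 := by
    have e : h0 r = h0 1 := by rw [hr0]; exact hhσ (h0 1)
    rw [hfdef, map_sub, e, sub_self]
  have hker : ∀ s : A, h0 s = 0 → s * r = 0 := by
    intro s hs
    have e := hπ s
    rw [hs, map_zero] at e
    exact e.symm
  have hfmem : f ∈ Submodule.span A {a} := by
    rw [← Submodule.Quotient.mk_eq_zero, ← hph f, hh0f, map_zero]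
  set j : A := a * r with hjdef
  have hjeq : j = a - a * f := by rw [hjdef, hfdef]; noncomm_ring
  have hja : j ∈ Submodule.span A {a} := by
    rw [hjeq]
    exact sub_mem (Submodule.mem_span_singleton_self a) (Submodule.smul_mem _ a hfmem)
  set N : Submodule A A := Submodule.span A {r} with hN
  set T : Submodule A A := Submodule.span A {j} with hT
  have hTN : T ≤ N := by
    rw [hT, Submodule.span_le, Set.singleton_subset_iff]
    exact Submodule.mem_span_singleton.2 ⟨a, by rw [smul_eq_mul, ← hjdef]⟩
  have hTker : Submodule.map h0 T ≤ LinearMap.ker p := by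
    rintro _ ⟨t, ht, rfl⟩
    obtain ⟨c, hc⟩ := Submodule.mem_span_singleton.1 ht
    rw [LinearMap.mem_ker, hph, Submodule.Quotient.mk_eq_zero, ← hc, smul_eq_mul]
    exact Submodule.smul_mem _ c hja
  have hmapN : Submodule.map h0 N = ⊤ := by
    rw [eq_top_iff]
    rintro x -
    obtain ⟨s, hs⟩ := hsurj0 x
    refine ⟨s * r, Submodule.mem_span_singleton.2 ⟨s, by rw [smul_eq_mul]⟩, ?_⟩
    have e : s * r = s - s * f := by rw [hfdef]; noncomm_ring
    have e2 : h0 (s * f) = 0 := by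
      have e3 : (s * f) = s • f := rfl
      rw [e3, map_smul, hh0f, smul_zero]
    rw [e, map_sub, e2, sub_zero, hs]
  have stepA : ∀ L' : Submodule A A, L' ≤ N → T ⊔ L' = N → L' = N := by
    intro L' hle hsup
    have htop : LinearMap.ker p ⊔ Submodule.map h0 L' = ⊤ := by
      rw [eq_top_iff, ← hmapN, ← hsup, Submodule.map_sup]
      exact sup_le_sup hTker le_rfl
    have hLtop : Submodule.map h0 L' = ⊤ := hsm _ htop
    have hmem : h0 r ∈ Submodule.map h0 L' := by rw [hLtop]; trivial
    obtain ⟨l, hlL, hlr⟩ := hmem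
    have h1 : h0 (r - l) = 0 := by rw [map_sub, hlr, sub_self]
    have h2 : (r - l) * r = 0 := hker _ h1
    obtain ⟨m, hm⟩ := Submodule.mem_span_singleton.1 (hle hlL)
    rw [smul_eq_mul] at hm
    have hlr2 : l * r = l := by rw [← hm, mul_assoc, hr]
    have hrl : r = l := by
      have e : (r - l) * r = r * r - l * r := by noncomm_ring
      rw [e, hr, hlr2] at h2
      exact sub_eq_zero.1 h2
    refine le_antisymm hle ?_
    rw [hN, Submodule.span_le, Set.singleton_subset_iff, hrl]
    exact hlL
  have stepB : ∀ L : Submodule A A, T ⊔ L = ⊤ → L = ⊤ := by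
    intro L hL
    have hmod : N ⊓ L ⊔ T = N ⊓ (L ⊔ T) := inf_sup_assoc_of_le L hTN
    have hNeq : T ⊔ (N ⊓ L) = N := by
      rw [sup_comm, hmod, sup_comm L T, hL, inf_top_eq]
    have hNN : N ⊓ L = N := stepA _ inf_le_left hNeq
    have hNL : N ≤ L := by rw [← hNN]; exact inf_le_right
    rw [eq_top_iff, ← hL]
    exact sup_le (le_trans hTN hNL) le_rfl
  have hjJ : j ∈ jacobsonRadicalSet A := by
    apply jac_of_leftinv
    intro y
    have hsup : T ⊔ Submodule.span A {1 - y * j} = ⊤ := by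
      rw [eq_top_iff]
      rintro x -
      have e : x = x * (y * j) + x * (1 - y * j) := by noncomm_ring
      rw [e]
      refine add_mem (Submodule.mem_sup_left ?_) (Submodule.mem_sup_right ?_)
      · exact Submodule.mem_span_singleton.2 ⟨x * y, by rw [smul_eq_mul, mul_assoc]⟩
      · exact Submodule.mem_span_singleton.2 ⟨x, by rw [smul_eq_mul]⟩
    have htop := stepB _ hsup
    have h1 : (1 : A) ∈ Submodule.span A {1 - y * j} := by rw [htop]; trivial
    obtain ⟨z, hz⟩ := Submodule.mem_span_singleton.1 h1
    rw [smul_eq_mul] at hz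
    exact ⟨z, hz⟩
  exact ⟨f, hff, hfmem, by rw [← hjeq]; exact hjJ⟩


lemma star_to_rhs (h : StarCond A) :
    (∀ a : A, ∃ b : A, a - a * b * a ∈ jacobsonRadicalSet A) ∧
    (∀ e : A, e * e - e ∈ jacobsonRadicalSet A →
      ∃ f : A, f * f = f ∧ f - e ∈ jacobsonRadicalSet A) := by
  constructor
  · intro a
    obtain ⟨f, hff, hfmem, hj⟩ := h a
    obtain ⟨c, hc⟩ := Submodule.mem_span_singleton.1 hfmem
    rw [smul_eq_mul] at hc
    refine ⟨c, ?_⟩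
    have e : a * c * a = a * f := by rw [← hc, mul_assoc]
    rw [e]; exact hj
  · intro g hg
    obtain ⟨f, hff, hfmem, hj⟩ := h g
    obtain ⟨c, hc⟩ := Submodule.mem_span_singleton.1 hfmem
    rw [smul_eq_mul] at hc
    refine ⟨f + (1 - f) * g * f, ?_, ?_⟩
    · have hf0 : f * (1 - f) = 0 := by rw [mul_sub, mul_one, hff, sub_self]
      have e : (f + (1 - f) * g * f) * (f + (1 - f) * g * f)
          = f * f + (f * (1 - f)) * (g * f) + (1 - f) * g * (f * f)
            + ((1 - f) * g) * ((f * (1 - f)) * (g * f)) := by noncomm_ring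
      rw [e, hff, hf0]
      simp
    · have key : f + (1 - f) * g * f - g
          = (g * f - g) + c * (g - g * g) + f * (g - g * f) := by
        rw [← hc]; noncomm_ring
      rw [key]
      refine jac_add (jac_add ?_ ?_) ?_
      · simpa [neg_sub] using jac_neg hj
      · exact jac_mul_left (by simpa [neg_sub] using jac_neg hg) c
      · exact jac_mul_left hj f

lemma rhs_to_star
    (hreg : ∀ a : A, ∃ b : A, a - a * b * a ∈ jacobsonRadicalSet A)
    (hlift : ∀ e : A, e * e - e ∈ jacobsonRadicalSet A →
      ∃ f : A, f * f = f ∧ f - e ∈ jacobsonRadicalSet A) :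
    StarCond A := by
  intro a
  obtain ⟨b, hb⟩ := hreg a
  set g : A := b * a * b * a with hgdef
  have hgba : g - b * a ∈ jacobsonRadicalSet A := by
    have e : g - b * a = -(b * (a - a * b * a)) := by rw [hgdef]; noncomm_ring
    rw [e]; exact jac_neg (jac_mul_left hb b)
  have hba : (b * a) * (b * a) - b * a ∈ jacobsonRadicalSet A := by
    have e : (b * a) * (b * a) - b * a = -(b * (a - a * b * a)) := by noncomm_ring
    rw [e]; exact jac_neg (jac_mul_left hb b)
  have hgg : g * g - g ∈ jacobsonRadicalSet A := by
    have e : g * g - g = g * (g - b * a) + (g - b * a) * (b * a)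
        + ((b * a) * (b * a) - b * a) + (b * a - g) := by noncomm_ring
    rw [e]
    refine jac_add (jac_add (jac_add ?_ ?_) hba) ?_
    · exact jac_mul_left hgba g
    · exact jac_mul_right hgba (b * a)
    · simpa [neg_sub] using jac_neg hgba
  obtain ⟨f₀, hf₀, hf₀g⟩ := hlift g hgg
  set t : A := f₀ * g + (1 - f₀) * (1 - g) with htdef
  have htJ : t - 1 ∈ jacobsonRadicalSet A := by
    have e : t - 1 = (f₀ - g) * g + f₀ * (g - f₀) + (g * g - g) + (f₀ * f₀ - f₀) := by
      rw [htdef]; noncomm_ring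
    rw [e, hf₀]
    simp only [sub_self, add_zero]
    refine jac_add (jac_add ?_ ?_) hgg
    · exact jac_mul_right hf₀g g
    · exact jac_mul_left (by simpa [neg_sub] using jac_neg hf₀g) f₀
  have hut : IsUnit t := by
    have h1 := htJ (-1)
    have e : 1 - (t - 1) * (-1) = t := by noncomm_ring
    rwa [e] at h1
  obtain ⟨u, hu⟩ := hut
  set v : A := (↑u⁻¹ : A) with hv
  have hvt : v * t = 1 := by rw [hv, ← hu]; exact u.inv_mul
  have htv : t * v = 1 := by rw [hv, ← hu]; exact u.mul_inv
  have hft : f₀ * t = f₀ * g := by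
    have e : f₀ * t = (f₀ * f₀) * g + (f₀ - f₀ * f₀) * (1 - g) := by rw [htdef]; noncomm_ring
    rw [hf₀] at e
    simpa using e
  set e0 : A := v * (f₀ * t) with he0
  have he0idem : e0 * e0 = e0 := by
    rw [he0]
    calc v * (f₀ * t) * (v * (f₀ * t)) = v * (f₀ * ((t * v) * (f₀ * t))) := by noncomm_ring
      _ = v * (f₀ * (f₀ * t)) := by rw [htv, one_mul]
      _ = v * (f₀ * f₀ * t) := by rw [mul_assoc f₀ f₀ t]
      _ = v * (f₀ * t) := by rw [hf₀]
  have he0mem : e0 ∈ Submodule.span A {a} := by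
    rw [he0, hft, hgdef]
    exact Submodule.mem_span_singleton.2 ⟨v * (f₀ * (b * a * b)), by
      rw [smul_eq_mul]; noncomm_ring⟩
  have he0f₀ : e0 - f₀ ∈ jacobsonRadicalSet A := by
    have e : e0 - f₀ = v * (f₀ * (t - 1) - (t - 1) * f₀) + (v * t - 1) * f₀ := by
      rw [he0]; noncomm_ring
    rw [e, hvt]
    simp only [sub_self, zero_mul, add_zero]
    exact jac_mul_left (jac_sub (jac_mul_left htJ f₀) (jac_mul_right htJ f₀)) v
  refine ⟨e0, he0idem, he0mem, ?_⟩
  have e : a - a * e0 = (a - a * b * a) + a * (b * a - g) + a * (g - f₀) + a * (f₀ - e0) := by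
    noncomm_ring
  rw [e]
  refine jac_add (jac_add (jac_add hb ?_) ?_) ?_
  · exact jac_mul_left (by simpa [neg_sub] using jac_neg hgba) a
  · exact jac_mul_left (by simpa [neg_sub] using jac_neg hf₀g) a
  · exact jac_mul_left (by simpa [neg_sub] using jac_neg he0f₀) a

end Star


section Transfer
open MulOpposite
variable {R : Type u} [Ring R]

lemma op_mem_jac {x : R} :
    op x ∈ jacobsonRadicalSet Rᵐᵒᵖ ↔ x ∈ jacobsonRadicalSet R := by
  constructor
  · intro h
    rw [mem_jac_iff_left]
    intro y
    have h1 := h (op y)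
    have e : (1 : Rᵐᵒᵖ) - op x * op y = op (1 - y * x) := rfl
    rw [e] at h1
    exact isUnit_op.mp h1
  · intro h y'
    have h1 := mem_jac_iff_left.1 h (unop y')
    have e : (1 : Rᵐᵒᵖ) - op x * y' = op (1 - unop y' * x) := rfl
    rw [e]
    exact isUnit_op.mpr h1

def opLE (R : Type u) [Ring R] : R ≃ₗ[Rᵐᵒᵖ] Rᵐᵒᵖ where
  toFun := op
  invFun := unop
  left_inv := fun _ => rfl
  right_inv := fun _ => rfl
  map_add' := fun _ _ => rfl
  map_smul' := fun _ _ => rfl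

lemma hpc_congr {S : Type u} [Ring S] {M : Type v} {M' : Type v'} [AddCommGroup M] [Module S M]
    [AddCommGroup M'] [Module S M'] (e : M ≃ₗ[S] M') :
    HasProjectiveCover S M → HasProjectiveCover S M' := by
  rintro ⟨P, iA, iM, p, h1, h2, h3⟩
  letI := iA; letI := iM
  refine ⟨P, iA, iM, (e : M →ₗ[S] M').comp p, h1, e.surjective.comp h2, ?_⟩
  intro L hL
  apply h3
  have hk : LinearMap.ker ((e : M →ₗ[S] M').comp p) = LinearMap.ker p := by
    rw [LinearMap.ker_comp, LinearEquiv.ker]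
    rfl
  rwa [hk] at hL

end Transfer


section Final
open MulOpposite
variable {R : Type u} [Ring R]

lemma op_reg (a b : R) : op a - op a * op b * op a = op (a - a * b * a) := by
  show op (a - a * (b * a)) = op (a - a * b * a)
  rw [mul_assoc]

theorem stmt_13' :
    (∀ x : R,
      HasProjectiveCover Rᵐᵒᵖ (R ⧸ Submodule.span Rᵐᵒᵖ {x})) ↔
    ((∀ a : R, ∃ b : R, a - a * b * a ∈ jacobsonRadicalSet R) ∧
      (∀ e : R, e * e - e ∈ jacobsonRadicalSet R →
        ∃ f : R, f * f = f ∧ f - e ∈ jacobsonRadicalSet R)) := by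
  have equivQ : ∀ x : R, (R ⧸ Submodule.span Rᵐᵒᵖ {x}) ≃ₗ[Rᵐᵒᵖ]
      (Rᵐᵒᵖ ⧸ Submodule.span Rᵐᵒᵖ {op x}) := fun x =>
    Submodule.Quotient.equiv _ _ (opLE R) (by
      rw [Submodule.map_span, Set.image_singleton]; rfl)
  constructor
  · intro H
    have H' : ∀ a : Rᵐᵒᵖ, HasProjectiveCover Rᵐᵒᵖ (Rᵐᵒᵖ ⧸ Submodule.span Rᵐᵒᵖ {a}) :=
      fun a => hpc_congr (equivQ a.unop) (H a.unop)
    obtain ⟨hreg, hlift⟩ := star_to_rhs (cover_to_star H')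
    constructor
    · intro a
      obtain ⟨b', hb'⟩ := hreg (op a)
      refine ⟨b'.unop, ?_⟩
      rw [← op_mem_jac, ← op_reg]
      exact hb'
    · intro e he
      obtain ⟨f', hf1, hf2⟩ := hlift (op e) (op_mem_jac.2 he)
      refine ⟨f'.unop, ?_, ?_⟩
      · calc f'.unop * f'.unop = (f' * f').unop := rfl
          _ = f'.unop := by rw [hf1]
      · rw [← op_mem_jac]
        exact hf2
  · rintro ⟨hreg, hlift⟩
    have hreg' : ∀ a' : Rᵐᵒᵖ, ∃ b', a' - a' * b' * a' ∈ jacobsonRadicalSet Rᵐᵒᵖ := by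
      intro a'
      obtain ⟨b, hb⟩ := hreg a'.unop
      refine ⟨op b, ?_⟩
      have h2 := op_mem_jac.2 hb
      rw [← op_reg] at h2
      exact h2
    have hlift' : ∀ e' : Rᵐᵒᵖ, e' * e' - e' ∈ jacobsonRadicalSet Rᵐᵒᵖ →
        ∃ f', f' * f' = f' ∧ f' - e' ∈ jacobsonRadicalSet Rᵐᵒᵖ := by
      intro e' he'
      have he : e'.unop * e'.unop - e'.unop ∈ jacobsonRadicalSet R := op_mem_jac.1 he'
      obtain ⟨f, hf1, hf2⟩ := hlift e'.unop he
      refine ⟨op f, ?_, ?_⟩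
      · show op (f * f) = op f
        rw [hf1]
      · exact op_mem_jac.2 hf2
    have hc := star_to_cover (rhs_to_star hreg' hlift')
    intro x
    exact hpc_congr (equivQ x).symm (hc (op x))

end Final


/-- Every cyclically presented right `R`-module has a projective cover iff `R/J(R)` is
Von Neumann regular and idempotents lift modulo `J(R)`. -/
theorem stmt_13 {R : Type u} [Ring R] :
    (∀ x : R,
      HasProjectiveCover Rᵐᵒᵖ (R ⧸ Submodule.span Rᵐᵒᵖ {x})) ↔
    ((∀ a : R, ∃ b : R, a - a * b * a ∈ jacobsonRadicalSet R) ∧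
      (∀ e : R, e * e - e ∈ jacobsonRadicalSet R →
        ∃ f : R, f * f = f ∧ f - e ∈ jacobsonRadicalSet R)) := by
  exact stmt_13'
end

section
/- If R is a domain and every cyclically presented right R-module has a projective cover, then R is a local ring. -/
open Submodule LinearMap Function

section Aux

variable {R : Type u} [Ring R] [IsDomain R]

/-- In a domain, a right inverse makes a unit. -/
lemma aux_isUnit_of_mul_eq_one {a b : R} (hab : a * b = 1) : IsUnit a := by
  have ha : a ≠ 0 := by
    rintro rfl
    rw [zero_mul] at hab
    exact zero_ne_one hab
  have h2 : a * (b * a) = a * 1 := by rw [← mul_assoc, hab, one_mul, mul_one]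
  exact ⟨⟨a, b, hab, mul_left_cancel₀ ha h2⟩, rfl⟩

/-- `R` is isomorphic to `Rᵐᵒᵖ` as a left `Rᵐᵒᵖ`-module. -/
def auxUnopEquiv (R : Type u) [Ring R] : Rᵐᵒᵖ ≃ₗ[Rᵐᵒᵖ] R where
  toFun := MulOpposite.unop
  map_add' _ _ := rfl
  map_smul' _ _ := rfl
  invFun := MulOpposite.op
  left_inv _ := rfl
  right_inv _ := rfl

/-- Any `Rᵐᵒᵖ`-linear endomorphism of `R` is left multiplication by `f 1`. -/
lemma aux_endo_eq_mul (f : R →ₗ[Rᵐᵒᵖ] R) (r : R) : f r = f 1 * r := by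
  have h1 : f ((MulOpposite.op r) • (1 : R)) = f 1 * r := by
    rw [f.map_smul, op_smul_eq_mul]
  rw [← h1, op_smul_eq_mul, one_mul]

/-- A submodule of `R` (over `Rᵐᵒᵖ`) containing `1` is everything. -/
lemma aux_eq_top_of_one_mem (N : Submodule Rᵐᵒᵖ R) (h1 : (1 : R) ∈ N) : N = ⊤ := by
  rw [eq_top_iff]
  intro x _
  have : x = (MulOpposite.op x) • (1 : R) := by
    rw [op_smul_eq_mul, one_mul]
  rw [this]
  exact N.smul_mem _ h1

end Aux

/-- If `R` is a domain and every cyclically presented right `R`-module has a projective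
cover, then `R` is local. -/
theorem stmt_14 {R : Type u} [Ring R] [IsDomain R]
    (h : ∀ x : R, HasProjectiveCover Rᵐᵒᵖ (R ⧸ Submodule.span Rᵐᵒᵖ {x})) :
    IsLocalRing R := by
  refine ⟨fun {a b} hab => ?_⟩
  by_cases hua : IsUnit a
  · exact Or.inl hua
  right
  obtain ⟨P, _, _, pc, hP, hps, hsmall⟩ := h a
  have hProjR : Module.Projective Rᵐᵒᵖ R :=
    Module.Projective.of_equiv (auxUnopEquiv R)
  -- lift the canonical projection through the cover
  obtain ⟨g, hg⟩ := Module.projective_lifting_property pc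
    (Submodule.span Rᵐᵒᵖ ({a} : Set R)).mkQ hps
  have hgsurj : Function.Surjective g := by
    have hsup : LinearMap.ker pc ⊔ LinearMap.range g = ⊤ := by
      rw [eq_top_iff]
      intro y _
      obtain ⟨r, hr⟩ := (Submodule.span Rᵐᵒᵖ ({a} : Set R)).mkQ_surjective (pc y)
      have hker : y - g r ∈ LinearMap.ker pc := by
        rw [LinearMap.mem_ker, map_sub, ← LinearMap.comp_apply, hg, hr, sub_self]
      have hy : y = (y - g r) + g r := by abel
      rw [hy]
      exact Submodule.add_mem_sup hker ⟨r, rfl⟩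
    have := hsmall _ hsup
    rwa [← LinearMap.range_eq_top]
  -- split: section of g
  obtain ⟨s, hs⟩ := Module.projective_lifting_property g (LinearMap.id : P →ₗ[Rᵐᵒᵖ] P) hgsurj
  have hgs : ∀ x : P, g (s x) = x := fun x => by
    have := congrArg (fun f => f x) hs; simpa using this
  set e : R →ₗ[Rᵐᵒᵖ] R := s.comp g with he
  have hidem : e 1 * e 1 = e 1 := by
    have h1 : e (e 1) = e 1 := by
      simp only [he, LinearMap.comp_apply]
      rw [hgs (g 1)]
    rw [← aux_endo_eq_mul e (e 1), h1]
  have hcases : e 1 = 0 ∨ e 1 = 1 := by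
    have hz : e 1 * (e 1 - 1) = 0 := by rw [mul_sub, hidem, mul_one, sub_self]
    rcases mul_eq_zero.1 hz with h0 | h0
    · exact Or.inl h0
    · exact Or.inr (by linear_combination (norm := noncomm_ring) h0)
  rcases hcases with h0 | h1
  · -- then P = 0, so R/aR = 0, so a is a unit: contradiction
    exfalso
    apply hua
    have hP0 : ∀ x : P, x = 0 := by
      intro x
      have hsx : s x = 0 := by
        have hex : e (s x) = s x := by
          simp only [he, LinearMap.comp_apply, hgs x]
        rw [aux_endo_eq_mul e (s x), h0, zero_mul] at hex
        exact hex.symm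
      have hgx := hgs x
      rw [hsx, map_zero] at hgx
      exact hgx.symm
    have hQ : ∀ y : R ⧸ Submodule.span Rᵐᵒᵖ ({a} : Set R), y = 0 := by
      intro y
      obtain ⟨x, hx⟩ := hps y
      rw [← hx, hP0 x, map_zero]
    have h1N : (1 : R) ∈ Submodule.span Rᵐᵒᵖ ({a} : Set R) := by
      have := hQ ((Submodule.span Rᵐᵒᵖ ({a} : Set R)).mkQ 1)
      rwa [Submodule.mkQ_apply, Submodule.Quotient.mk_eq_zero] at this
    obtain ⟨c, hc⟩ := Submodule.mem_span_singleton.1 h1N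
    exact aux_isUnit_of_mul_eq_one (show a * c.unop = 1 from hc)
  · -- then g is an isomorphism and aR is superfluous in R
    have hginj : Function.Injective g := by
      intro x y hxy
      have hx : e x = x := by rw [aux_endo_eq_mul e x, h1, one_mul]
      have hy : e y = y := by rw [aux_endo_eq_mul e y, h1, one_mul]
      rw [← hx, ← hy]
      simp only [he, LinearMap.comp_apply, hxy]
    have hcomap : Submodule.comap g (LinearMap.ker pc)
        = Submodule.span Rᵐᵒᵖ ({a} : Set R) := by
      rw [← LinearMap.ker_comp, hg, Submodule.ker_mkQ]
    have hmapN : Submodule.map g (Submodule.span Rᵐᵒᵖ ({a} : Set R)) = LinearMap.ker pc := by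
      have hmc := Submodule.map_comap_eq_of_surjective hgsurj (LinearMap.ker pc)
      rw [hcomap] at hmc
      exact hmc
    -- span {a} is superfluous
    have hNsmall : ∀ L : Submodule Rᵐᵒᵖ R,
        Submodule.span Rᵐᵒᵖ ({a} : Set R) ⊔ L = ⊤ → L = ⊤ := by
      intro L hL
      have hmap : LinearMap.ker pc ⊔ Submodule.map g L = ⊤ := by
        rw [← hmapN, ← Submodule.map_sup, hL, Submodule.map_top,
          LinearMap.range_eq_top.2 hgsurj]
      have htop := hsmall _ hmap
      have hc := congrArg (Submodule.comap g) htop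
      rwa [Submodule.comap_map_eq_of_injective hginj, Submodule.comap_top] at hc
    -- apply with L = span {b}
    have hsup : Submodule.span Rᵐᵒᵖ ({a} : Set R) ⊔ Submodule.span Rᵐᵒᵖ ({b} : Set R) = ⊤ := by
      apply aux_eq_top_of_one_mem
      rw [← hab]
      exact Submodule.add_mem_sup (Submodule.mem_span_singleton_self a)
        (Submodule.mem_span_singleton_self b)
    have hbtop := hNsmall _ hsup
    have h1b : (1 : R) ∈ Submodule.span Rᵐᵒᵖ ({b} : Set R) := hbtop ▸ Submodule.mem_top
    obtain ⟨c, hc⟩ := Submodule.mem_span_singleton.1 h1b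
    exact aux_isUnit_of_mul_eq_one (show b * c.unop = 1 from hc)
end

section
/- Let M be a right R-module with endomorphism ring E = End(M), let M = M₁ ⊕ M₂ with canonical projection π₂ : M → M₂ (kernel M₁), and let e ∈ E be the idempotent with image M₁ and kernel M₂. For s ∈ E, the composite π₂ ∘ s : M → M₂ is a split epimorphism if and only if eE + sE = E. -/
open Submodule LinearMap Function

/-- Let `M = M₁ ⊕ M₂` with `e ∈ E = End(M)` the idempotent with image `M₁` and kernel
`M₂`, and `π₂ : M → M₂` the projection with kernel `M₁`. For `s ∈ E`, `π₂ ∘ s` is a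
split epimorphism iff `eE + sE = E` (equivalently, `1 = e u + s v` for some `u, v`). -/
theorem stmt_16 {R : Type*} [Ring R]
    {M : Type*} [AddCommGroup M] [Module Rᵐᵒᵖ M]
    (e : Module.End Rᵐᵒᵖ M) (he : IsIdempotentElem e)
    (π₂ : M →ₗ[Rᵐᵒᵖ] ↥(LinearMap.ker e))
    (hπ₂ : ∀ m : M, (π₂ m : M) = m - e m)
    (s : Module.End Rᵐᵒᵖ M) :
    (∃ g : ↥(LinearMap.ker e) →ₗ[Rᵐᵒᵖ] M,
        (π₂ ∘ₗ (s : M →ₗ[Rᵐᵒᵖ] M)) ∘ₗ g = LinearMap.id) ↔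
      ∃ u v : Module.End Rᵐᵒᵖ M, e * u + s * v = 1 := by
  constructor
  · rintro ⟨g, hg⟩
    refine ⟨1 - s * (g ∘ₗ π₂), g ∘ₗ π₂, ?_⟩
    ext m
    set t : M := s (g (π₂ m)) with ht
    have h2 : t - e t = m - e m := by
      have h1 : ((π₂ (s (g (π₂ m))) : M)) = ((π₂ m : M)) :=
        congrArg Subtype.val (LinearMap.congr_fun hg (π₂ m))
      rwa [hπ₂, hπ₂] at h1
    have key : e (m - t) + t = m :=
      calc e (m - t) + t = e m + (t - e t) := by rw [map_sub]; abel
        _ = e m + (m - e m) := by rw [h2]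
        _ = m := by abel
    simpa [Module.End.mul_apply, sub_eq_iff_eq_add'] using key
  · rintro ⟨u, v, huv⟩
    refine ⟨v ∘ₗ (LinearMap.ker e).subtype, ?_⟩
    ext x
    have hx : e (x : M) = 0 := x.2
    have h1 : e (u (x : M)) + s (v (x : M)) = (x : M) := by
      simpa [Module.End.mul_apply] using LinearMap.congr_fun huv (x : M)
    have hsv : s (v (x : M)) = (x : M) - e (u (x : M)) := by
      exact eq_sub_of_add_eq' h1
    have hee : e (e (u (x : M))) = e (u (x : M)) := LinearMap.congr_fun he (u (x : M))
    simp only [LinearMap.comp_apply, Submodule.coe_subtype, LinearMap.id_coe, id_eq]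
    rw [hπ₂, hsv, map_sub, hx, hee]
    abel
end

section
/- Let M be a quasi-projective right R-module, E = End(M), s ∈ E, π : M → M/s(M) the canonical epimorphism and φ : E → E/sE the canonical epimorphism. Then for every g ∈ E, the restriction π|_{g(M)} : g(M) → M/s(M) is surjective if and only if φ|_{gE} : gE → E/sE is surjective. -/
open Submodule LinearMap Function

/-- `M` is quasi-projective: for every epimorphism `f : M → L` and homomorphism
`h : M → L` there is `k : M → M` with `f ∘ k = h`. -/
def QuasiProjective (S : Type u) [Ring S] (M : Type v) [AddCommGroup M]
    [Module S M] : Prop :=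
  ∀ (L : Type v) [AddCommGroup L] [Module S L] (f : M →ₗ[S] L),
    Function.Surjective f → ∀ h : M →ₗ[S] L, ∃ k : M →ₗ[S] M, f ∘ₗ k = h

/-- For a quasi-projective right `R`-module `M` with `E = End(M)`, `s, g ∈ E`:
the restriction `π|_{g(M)} : g(M) → M/s(M)` of the canonical epimorphism is surjective
iff the restriction `φ|_{gE} : gE → E/sE` of the canonical epimorphism is surjective. -/
theorem stmt_17 {R : Type*} [Ring R]
    {M : Type v} [AddCommGroup M] [Module Rᵐᵒᵖ M]
    (hqp : QuasiProjective Rᵐᵒᵖ M)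
    (s g : Module.End Rᵐᵒᵖ M) :
    Function.Surjective
      (fun m : M => (LinearMap.range (s : M →ₗ[Rᵐᵒᵖ] M)).mkQ (g m)) ↔
    Function.Surjective
      (fun x : Module.End Rᵐᵒᵖ M =>
        (Submodule.span (Module.End Rᵐᵒᵖ M)ᵐᵒᵖ {s}).mkQ (g * x)) := by
  constructor
  · intro hsurj
    -- quasi-projectivity with f = mkQ ∘ g (surjective) and h = mkQ
    obtain ⟨k, hk⟩ := hqp (M ⧸ LinearMap.range (s : M →ₗ[Rᵐᵒᵖ] M))
      ((LinearMap.range (s : M →ₗ[Rᵐᵒᵖ] M)).mkQ ∘ₗ g) hsurj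
      (LinearMap.range (s : M →ₗ[Rᵐᵒᵖ] M)).mkQ
    -- g ∘ k - 1 has range in range s
    have hr : ∀ m : M, g (k m) - m ∈ LinearMap.range (s : M →ₗ[Rᵐᵒᵖ] M) := by
      intro m
      rw [← Submodule.Quotient.mk_eq_zero]
      have := congrArg (fun f : M →ₗ[Rᵐᵒᵖ] _ => f m) hk
      simp only [LinearMap.comp_apply, Submodule.mkQ_apply] at this ⊢
      rw [Submodule.Quotient.mk_sub, this, sub_self]
    -- lift through s by quasi-projectivity again
    obtain ⟨t, ht⟩ := hqp (LinearMap.range (s : M →ₗ[Rᵐᵒᵖ] M))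
      (s : M →ₗ[Rᵐᵒᵖ] M).rangeRestrict (LinearMap.surjective_rangeRestrict _)
      (LinearMap.codRestrict _ (g ∘ₗ k - LinearMap.id) (fun m => by
        simpa using hr m))
    have hst : s * t = g * k - 1 := by
      ext m
      have := congrArg (fun f : M →ₗ[Rᵐᵒᵖ] _ => ((f m : LinearMap.range (s : M →ₗ[Rᵐᵒᵖ] M)) : M)) ht
      simpa using this
    intro q
    obtain ⟨e, rfl⟩ := (Submodule.span (Module.End Rᵐᵒᵖ M)ᵐᵒᵖ {s}).mkQ_surjective q
    refine ⟨k * e, ?_⟩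
    simp only [Submodule.mkQ_apply]
    rw [Submodule.Quotient.eq]
    have : g * (k * e) - e = s * (t * e) := by
      rw [← mul_assoc, ← mul_assoc, hst, sub_mul, one_mul]
    rw [this]
    exact Submodule.mem_span_singleton.mpr ⟨MulOpposite.op (t * e), rfl⟩
  · intro hsurj
    obtain ⟨x, hx⟩ := hsurj ((Submodule.span (Module.End Rᵐᵒᵖ M)ᵐᵒᵖ {s}).mkQ 1)
    simp only [Submodule.mkQ_apply] at hx
    rw [Submodule.Quotient.eq] at hx
    obtain ⟨a, ha⟩ := Submodule.mem_span_singleton.mp hx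
    -- g * x - 1 = s * a.unop
    have hgx : g * x = 1 + s * a.unop := by
      have : MulOpposite.op a.unop • s = s * a.unop := rfl
      rw [← MulOpposite.op_unop a, this] at ha
      rw [ha]; abel
    intro q
    obtain ⟨m, rfl⟩ := (LinearMap.range (s : M →ₗ[Rᵐᵒᵖ] M)).mkQ_surjective q
    refine ⟨x m, ?_⟩
    have : g (x m) = m + s (a.unop m) := by
      have := congrArg (fun f : Module.End Rᵐᵒᵖ M => f m) hgx
      simpa using this
    have hz : (Submodule.Quotient.mk (s (a.unop m)) :
        M ⧸ LinearMap.range (s : M →ₗ[Rᵐᵒᵖ] M)) = 0 :=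
      (Submodule.Quotient.mk_eq_zero _).mpr ⟨a.unop m, rfl⟩
    simp only [this, Submodule.mkQ_apply, Submodule.Quotient.mk_add, hz, add_zero]
end

section
/- Let M be a quasi-projective right R-module and E = End(M). For g ∈ E, the right ideal gE is a direct summand of E_E if and only if g(M) is a direct summand of M. -/
open Submodule LinearMap Function

section Aux

variable {S : Type*} [Ring S]

lemma mem_right_span_singleton {g x : S} :
    x ∈ Submodule.span Sᵐᵒᵖ {g} ↔ ∃ a : S, g * a = x := by
  rw [Submodule.mem_span_singleton]
  constructor
  · rintro ⟨c, rfl⟩; exact ⟨c.unop, rfl⟩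
  · rintro ⟨a, rfl⟩; exact ⟨MulOpposite.op a, rfl⟩

lemma span_eq_span_of_mutual {g e : S} (h1 : ∃ a, g * a = e) (h2 : ∃ b, e * b = g) :
    Submodule.span Sᵐᵒᵖ {g} = Submodule.span Sᵐᵒᵖ {e} := by
  apply le_antisymm <;> rw [Submodule.span_le, Set.singleton_subset_iff] <;>
    rw [SetLike.mem_coe, mem_right_span_singleton]
  · exact h2
  · exact h1

lemma idem_span_isCompl {e : S} (he : e * e = e) :
    ∃ K : Submodule Sᵐᵒᵖ S, IsCompl (Submodule.span Sᵐᵒᵖ {e}) K := by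
  refine ⟨Submodule.span Sᵐᵒᵖ {1 - e}, ?_, ?_⟩
  · rw [disjoint_def]
    intro x hx hx'
    rw [mem_right_span_singleton] at hx hx'
    obtain ⟨a, rfl⟩ := hx
    obtain ⟨b, hb⟩ := hx'
    have h1 : e * (e * a) = e * a := by rw [← mul_assoc, he]
    have h2 : e * ((1 - e) * b) = 0 := by
      rw [← mul_assoc, mul_sub, mul_one, he, sub_self, zero_mul]
    rw [← h1, ← hb, h2]
  · rw [codisjoint_iff_le_sup]
    intro x _
    have : x = e * x + (1 - e) * x := by noncomm_ring
    rw [this]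
    exact Submodule.add_mem_sup
      (mem_right_span_singleton.mpr ⟨x, rfl⟩)
      (mem_right_span_singleton.mpr ⟨x, rfl⟩)

end Aux

/-- For a quasi-projective right `R`-module `M` with `E = End(M)` and `g ∈ E`:
`gE` is a direct summand of `E_E` iff `g(M)` is a direct summand of `M`. -/
theorem stmt_18 {R : Type*} [Ring R]
    {M : Type v} [AddCommGroup M] [Module Rᵐᵒᵖ M]
    (hqp : QuasiProjective Rᵐᵒᵖ M)
    (g : Module.End Rᵐᵒᵖ M) :
    (∃ K : Submodule (Module.End Rᵐᵒᵖ M)ᵐᵒᵖ (Module.End Rᵐᵒᵖ M),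
        IsCompl (Submodule.span (Module.End Rᵐᵒᵖ M)ᵐᵒᵖ {g}) K) ↔
    (∃ L : Submodule Rᵐᵒᵖ M, IsCompl (LinearMap.range (g : M →ₗ[Rᵐᵒᵖ] M)) L) := by
  constructor
  · rintro ⟨K, hK⟩
    -- decompose 1 = e + k
    have h1 : (1 : Module.End Rᵐᵒᵖ M) ∈
        Submodule.span (Module.End Rᵐᵒᵖ M)ᵐᵒᵖ {g} ⊔ K := by
      rw [hK.sup_eq_top]; trivial
    obtain ⟨e, he, k, hk, hek⟩ := Submodule.mem_sup.mp h1
    -- e acts as identity on gE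
    have hfix : ∀ x ∈ Submodule.span (Module.End Rᵐᵒᵖ M)ᵐᵒᵖ {g}, e * x = x := by
      intro x hx
      have hex : e * x ∈ Submodule.span (Module.End Rᵐᵒᵖ M)ᵐᵒᵖ {g} := by
        rw [mem_right_span_singleton] at hx ⊢
        obtain ⟨a, rfl⟩ := hx
        rw [mem_right_span_singleton] at he
        obtain ⟨b, rfl⟩ := he
        exact ⟨b * (g * a), by rw [← mul_assoc, ← mul_assoc]⟩
      have hkx : k * x ∈ K := by
        have : k * x = (MulOpposite.op x) • k := rfl
        rw [this]; exact K.smul_mem _ hk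
      have hsplit : x = e * x + k * x := by
        have := congrArg (· * x) hek
        simpa [add_mul] using this.symm
      have hzero : x - e * x ∈ Submodule.span (Module.End Rᵐᵒᵖ M)ᵐᵒᵖ {g} ⊓ K := by
        constructor
        · exact Submodule.sub_mem _ hx hex
        · rw [sub_eq_of_eq_add' hsplit]; exact hkx
      rw [hK.inf_eq_bot, Submodule.mem_bot] at hzero
      have := sub_eq_zero.mp hzero
      exact this.symm
    have hg : e * g = g := hfix g (Submodule.mem_span_singleton_self g)
    have hee : e * e = e := hfix e he
    obtain ⟨a, ha⟩ := mem_right_span_singleton.mp he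
    -- range g = range e
    have hrange : LinearMap.range (g : M →ₗ[Rᵐᵒᵖ] M) =
        LinearMap.range (e : M →ₗ[Rᵐᵒᵖ] M) := by
      apply le_antisymm
      · rintro _ ⟨x, rfl⟩
        exact ⟨g x, congrFun (congrArg (fun f => f.toFun) hg) x⟩
      · rintro _ ⟨x, rfl⟩
        exact ⟨a x, congrFun (congrArg (fun f => f.toFun) ha) x⟩
    rw [hrange]
    have hproj : LinearMap.IsProj (LinearMap.range (e : M →ₗ[Rᵐᵒᵖ] M)) e := by
      constructor
      · intro x; exact ⟨x, rfl⟩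
      · rintro _ ⟨x, rfl⟩
        exact congrFun (congrArg (fun f => f.toFun) hee) x
    exact ⟨_, hproj.isCompl⟩
  · rintro ⟨L, hL⟩
    set p := LinearMap.range (g : M →ₗ[Rᵐᵒᵖ] M) with hp
    -- the projection onto p along L
    let π : M →ₗ[Rᵐᵒᵖ] p := p.linearProjOfIsCompl L hL
    obtain ⟨k, hk⟩ := hqp (↥p) g.rangeRestrict g.surjective_rangeRestrict π
    set e : Module.End Rᵐᵒᵖ M := g * k with he
    have heπ : ∀ x : M, e x = π x := by
      intro x
      have : g.rangeRestrict (k x) = π x := congrFun (congrArg (fun f => f.toFun) hk) x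
      calc e x = (g.rangeRestrict (k x) : M) := rfl
        _ = π x := by rw [this]
    have hfix : ∀ x : M, x ∈ p → e x = x := by
      intro x hx
      rw [heπ]
      exact congrArg _ (Submodule.linearProjOfIsCompl_apply_left hL ⟨x, hx⟩)
    have hee : e * e = e := by
      ext x
      have : e x ∈ p := by rw [heπ]; exact (π x).2
      exact hfix _ this
    have hge : g = e * g := by
      ext x
      exact (hfix (g x) ⟨x, rfl⟩).symm
    rw [span_eq_span_of_mutual ⟨k, rfl⟩ ⟨g, hge.symm⟩]
    exact idem_span_isCompl hee
end

section
/- Let M be a quasi-projective right R-module, E = End(M), s ∈ E, and e ∈ E an idempotent. Let π : M → M/s(M) and φ : E → E/sE be the canonical epimorphisms. Then ker(π|_{e(M)}) = e(M) ∩ s(M) is superfluous in e(M) if and only if ker(φ|_{eE}) = eE ∩ sE is superfluous in eE. -/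
open Submodule LinearMap Function

section Aux

variable {R : Type*} [Ring R] {M : Type v} [AddCommGroup M] [Module Rᵐᵒᵖ M]

/-- The set of endomorphisms with range contained in `N`, as a right ideal
(submodule over the opposite of the endomorphism ring). -/
def rangeLE (N : Submodule Rᵐᵒᵖ M) :
    Submodule (Module.End Rᵐᵒᵖ M)ᵐᵒᵖ (Module.End Rᵐᵒᵖ M) where
  carrier := {f | LinearMap.range f ≤ N}
  add_mem' := by
    intro f g hf hg
    rintro _ ⟨m, rfl⟩
    exact N.add_mem (hf ⟨m, rfl⟩) (hg ⟨m, rfl⟩)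
  zero_mem' := by
    rintro _ ⟨m, rfl⟩
    simp
  smul_mem' := by
    intro c f hf
    rintro _ ⟨m, rfl⟩
    have h : (c • f) m = f (c.unop m) := by
      rw [MulOpposite.smul_eq_mul_unop, Module.End.mul_apply]
    rw [h]
    exact hf ⟨c.unop m, rfl⟩

lemma mem_rangeLE_iff (N : Submodule Rᵐᵒᵖ M) (f : Module.End Rᵐᵒᵖ M) :
    f ∈ rangeLE N ↔ LinearMap.range f ≤ N := Iff.rfl

lemma idem_fix {e : Module.End Rᵐᵒᵖ M} (he : IsIdempotentElem e)
    {m : M} (hm : m ∈ LinearMap.range e) : e m = m := by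
  obtain ⟨y, rfl⟩ := hm
  have : (e * e) y = e y := by rw [he]
  simpa [Module.End.mul_apply] using this

lemma range_le_of_mem_span (a x : Module.End Rᵐᵒᵖ M)
    (hx : x ∈ Submodule.span (Module.End Rᵐᵒᵖ M)ᵐᵒᵖ {a}) :
    LinearMap.range x ≤ LinearMap.range a := by
  obtain ⟨r, rfl⟩ := Submodule.mem_span_singleton.mp hx
  rw [MulOpposite.smul_eq_mul_unop, Module.End.mul_eq_comp]
  exact LinearMap.range_comp_le_range _ _

lemma mem_span_e_of_range {e : Module.End Rᵐᵒᵖ M} (he : IsIdempotentElem e)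
    (x : Module.End Rᵐᵒᵖ M) (hx : LinearMap.range x ≤ LinearMap.range e) :
    x ∈ Submodule.span (Module.End Rᵐᵒᵖ M)ᵐᵒᵖ {e} := by
  refine Submodule.mem_span_singleton.mpr ⟨MulOpposite.op x, ?_⟩
  rw [op_smul_eq_mul]
  ext m
  rw [Module.End.mul_apply]
  exact idem_fix he (hx ⟨m, rfl⟩)

end Aux

/-- For a quasi-projective right `R`-module `M` with `E = End(M)`, `s ∈ E` and an
idempotent `e ∈ E`: `ker(π|_{e(M)}) = e(M) ∩ s(M)` is superfluous in `e(M)` iff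
`ker(φ|_{eE}) = eE ∩ sE` is superfluous in `eE`. -/
theorem stmt_19 {R : Type*} [Ring R]
    {M : Type v} [AddCommGroup M] [Module Rᵐᵒᵖ M]
    (hqp : QuasiProjective Rᵐᵒᵖ M)
    (s e : Module.End Rᵐᵒᵖ M) (he : IsIdempotentElem e) :
    (∀ L : Submodule Rᵐᵒᵖ M,
        L ≤ LinearMap.range (e : M →ₗ[Rᵐᵒᵖ] M) →
        (LinearMap.range (e : M →ₗ[Rᵐᵒᵖ] M) ⊓ LinearMap.range (s : M →ₗ[Rᵐᵒᵖ] M))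
            ⊔ L = LinearMap.range (e : M →ₗ[Rᵐᵒᵖ] M) →
        L = LinearMap.range (e : M →ₗ[Rᵐᵒᵖ] M)) ↔
    (∀ L : Submodule (Module.End Rᵐᵒᵖ M)ᵐᵒᵖ (Module.End Rᵐᵒᵖ M),
        L ≤ Submodule.span (Module.End Rᵐᵒᵖ M)ᵐᵒᵖ {e} →
        (Submodule.span (Module.End Rᵐᵒᵖ M)ᵐᵒᵖ {e}
            ⊓ Submodule.span (Module.End Rᵐᵒᵖ M)ᵐᵒᵖ {s}) ⊔ L
          = Submodule.span (Module.End Rᵐᵒᵖ M)ᵐᵒᵖ {e} →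
        L = Submodule.span (Module.End Rᵐᵒᵖ M)ᵐᵒᵖ {e}) := by
  constructor
  · -- module side implies ideal side
    intro hM L hLe hLsum
    have he_mem : e ∈ (Submodule.span (Module.End Rᵐᵒᵖ M)ᵐᵒᵖ {e}
        ⊓ Submodule.span (Module.End Rᵐᵒᵖ M)ᵐᵒᵖ {s}) ⊔ L := by
      rw [hLsum]; exact Submodule.mem_span_singleton_self e
    obtain ⟨x, hx, l, hl, hxl⟩ := Submodule.mem_sup.mp he_mem
    have hl_le : LinearMap.range l ≤ LinearMap.range e :=
      range_le_of_mem_span e l (hLe hl)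
    have hsup : (LinearMap.range e ⊓ LinearMap.range s) ⊔ LinearMap.range l
        = LinearMap.range e := by
      apply le_antisymm (sup_le inf_le_left hl_le)
      rintro _ ⟨m, rfl⟩
      have hm : e m = x m + l m := by rw [← hxl]; rfl
      rw [hm]
      exact Submodule.add_mem_sup
        ⟨range_le_of_mem_span e x hx.1 ⟨m, rfl⟩,
         range_le_of_mem_span s x hx.2 ⟨m, rfl⟩⟩ ⟨m, rfl⟩
    have hl_range : LinearMap.range l = LinearMap.range e :=
      hM (LinearMap.range l) hl_le hsup
    -- quasi-projectivity: lift `e` through `l`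
    have hmem : ∀ m, l m ∈ LinearMap.range e := fun m => hl_range ▸ ⟨m, rfl⟩
    set f : M →ₗ[Rᵐᵒᵖ] ↥(LinearMap.range e) :=
      l.codRestrict (LinearMap.range e) hmem with hf_def
    have hf : Function.Surjective f := by
      rintro ⟨y, hy⟩
      rw [← hl_range] at hy
      obtain ⟨m, hm⟩ := hy
      exact ⟨m, Subtype.ext hm⟩
    obtain ⟨k, hk⟩ := hqp ↥(LinearMap.range e) f hf
      (e.codRestrict (LinearMap.range e) (fun m => ⟨m, rfl⟩))
    have hlk : l * k = e := by
      ext m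
      have h1 := congrArg Subtype.val (LinearMap.congr_fun hk m)
      simp [hf_def] at h1
      rw [Module.End.mul_apply]
      exact h1
    have he_in : e ∈ L := by
      have h2 : MulOpposite.op k • l = e := by rw [op_smul_eq_mul]; exact hlk
      exact h2 ▸ L.smul_mem (MulOpposite.op k) hl
    exact le_antisymm hLe
      (Submodule.span_le.mpr (Set.singleton_subset_iff.mpr he_in))
  · -- ideal side implies module side
    intro hE N hNe hNsum
    set q : M →ₗ[Rᵐᵒᵖ] M ⧸ N := N.mkQ with hq_def
    have key : ∀ m, (q ∘ₗ e) m ∈ LinearMap.range (q ∘ₗ s) := by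
      intro m
      have h1 : e m ∈ (LinearMap.range e ⊓ LinearMap.range s) ⊔ N := by
        rw [hNsum]; exact ⟨m, rfl⟩
      obtain ⟨y, hy, n, hn, hyn⟩ := Submodule.mem_sup.mp h1
      obtain ⟨m', hm'⟩ := hy.2
      refine ⟨m', ?_⟩
      have h2 : q (e m) = q y := by
        rw [← hyn, map_add]
        have : q n = 0 := (Submodule.Quotient.mk_eq_zero N).mpr hn
        rw [this, add_zero]
      simp only [LinearMap.comp_apply]
      rw [hm', h2]
    obtain ⟨k, hk⟩ := hqp ↥(LinearMap.range (q ∘ₗ s))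
      ((q ∘ₗ s).codRestrict (LinearMap.range (q ∘ₗ s)) (fun m => ⟨m, rfl⟩))
      (by rintro ⟨y, m, rfl⟩; exact ⟨m, rfl⟩)
      ((q ∘ₗ e).codRestrict (LinearMap.range (q ∘ₗ s)) key)
    have hqsk : ∀ m, q (s (k m)) = q (e m) := by
      intro m
      have h1 := congrArg Subtype.val (LinearMap.congr_fun hk m)
      simp at h1
      exact h1
    set x : Module.End Rᵐᵒᵖ M := s * k with hx_def
    have hlN : LinearMap.range (e - x) ≤ N := by
      rintro _ ⟨m, rfl⟩
      have h1 : (e - x) m = e m - s (k m) := by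
        simp [hx_def, Module.End.mul_apply]
      rw [h1, ← Submodule.Quotient.mk_eq_zero N]
      have : q (e m - s (k m)) = 0 := by
        rw [map_sub, hqsk m, sub_self]
      simpa [hq_def] using this
    have hxe : LinearMap.range x ≤ LinearMap.range e := by
      rintro _ ⟨m, rfl⟩
      have h1 : x m = e m - (e - x) m := by simp
      rw [h1]
      exact Submodule.sub_mem _ ⟨m, rfl⟩ (hNe (hlN ⟨m, rfl⟩))
    have hx_spanE : x ∈ Submodule.span (Module.End Rᵐᵒᵖ M)ᵐᵒᵖ {e} :=
      mem_span_e_of_range he x hxe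
    have hx_spanS : x ∈ Submodule.span (Module.End Rᵐᵒᵖ M)ᵐᵒᵖ {s} :=
      Submodule.mem_span_singleton.mpr ⟨MulOpposite.op k, by rw [op_smul_eq_mul]⟩
    have hl_spanE : (e - x) ∈ Submodule.span (Module.End Rᵐᵒᵖ M)ᵐᵒᵖ {e} :=
      mem_span_e_of_range he _ (hlN.trans hNe)
    have hsum : (Submodule.span (Module.End Rᵐᵒᵖ M)ᵐᵒᵖ {e}
        ⊓ Submodule.span (Module.End Rᵐᵒᵖ M)ᵐᵒᵖ {s})
        ⊔ (Submodule.span (Module.End Rᵐᵒᵖ M)ᵐᵒᵖ {e} ⊓ rangeLE N)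
        = Submodule.span (Module.End Rᵐᵒᵖ M)ᵐᵒᵖ {e} := by
      apply le_antisymm (sup_le inf_le_left inf_le_left)
      refine Submodule.span_le.mpr (Set.singleton_subset_iff.mpr ?_)
      have h1 : e = x + (e - x) := by abel
      have h4 := Submodule.add_mem_sup (S := Submodule.span (Module.End Rᵐᵒᵖ M)ᵐᵒᵖ {e}
        ⊓ Submodule.span (Module.End Rᵐᵒᵖ M)ᵐᵒᵖ {s})
        (T := Submodule.span (Module.End Rᵐᵒᵖ M)ᵐᵒᵖ {e} ⊓ rangeLE N)
        ⟨hx_spanE, hx_spanS⟩ ⟨hl_spanE, hlN⟩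
      rwa [← h1] at h4
    have h2 := hE _ inf_le_left hsum
    have heN : LinearMap.range e ≤ N := by
      have h3 : e ∈ Submodule.span (Module.End Rᵐᵒᵖ M)ᵐᵒᵖ {e} ⊓ rangeLE N := by
        rw [h2]; exact Submodule.mem_span_singleton_self e
      exact h3.2
    exact le_antisymm hNe heN
end
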